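/- arXiv:2210.02233 — 4 statements merged into one kernel-verified Lean document; each statement's English description precedes it below -/
import Mathlib

section
/- Let R ⊆ ℕ be a sublacunary good set and let S ⊆ R be a good set with positive relative upper density in R, i.e. ‖S‖_{1,R} > 0. Then for every irrational β the limit measure μ_{S,β} is absolutely continuous with respect to μ_{R,β}, and the Radon–Nikodym derivative ρ_β = dμ_{S,β}/dμ_{R,β} satisfies ‖ρ_β‖_{L^∞(μ_{R,β})} ≤ 1/‖S‖_{1,R}. -/
open MeasureTheory Filter Topology
open scoped BigOperators

noncomputable section

open Classical in
/-- `S(N) = S ∩ {1,…,N}` as a `Finset`. -/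
def initSeg (S : Set ℕ) (N : ℕ) : Finset ℕ := (Finset.Icc 1 N).filter (· ∈ S)

/-- The average `(1/#S(N)) ∑_{s ∈ S(N)} f (sα mod 1)`. -/
def empAvg (S : Set ℕ) (α : ℝ) (N : ℕ) (f : UnitAddCircle → ℝ) : ℝ :=
  ((initSeg S N).card : ℝ)⁻¹ * ∑ s ∈ initSeg S N, f (((s : ℝ) * α : ℝ) : UnitAddCircle)

/-- `μ` is the weak limit of the empirical measures `(1/#S(N)) ∑_{s ∈ S(N)} δ_{sα mod 1}`. -/
def IsLimitMeasure (S : Set ℕ) (α : ℝ) (μ : Measure UnitAddCircle) : Prop :=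
  ∀ f : C(UnitAddCircle, ℝ),
    Tendsto (fun N => empAvg S α N (fun x => f x)) atTop (𝓝 (∫ x, f x ∂μ))

/-- A good set: infinite, and for every `α` the empirical measures converge weakly
to some (probability) limit measure `μ_{S,α}`. -/
def IsGoodSet (S : Set ℕ) : Prop :=
  S.Infinite ∧ ∀ α : ℝ, ∃ μ : Measure UnitAddCircle, IsProbabilityMeasure μ ∧ IsLimitMeasure S α μ

/-- `R` is sublacunary: `log N / #R(N) → 0`. -/
def Sublacunary (R : Set ℕ) : Prop :=
  Tendsto (fun N : ℕ => Real.log N / ((initSeg R N).card : ℝ)) atTop (𝓝 0)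

open Classical in
/-- `#{n < N : r_n ∈ S}` where `(r_n)` is the increasing (0-indexed) enumeration of `R`. -/
def relCount (R S : Set ℕ) (N : ℕ) : ℕ :=
  ((Finset.range N).filter (fun n => Nat.nth (· ∈ R) n ∈ S)).card

/-- Weighted average `(1/∑_{n<N} w n) ∑_{n<N} w n · f (r_n β mod 1)`. -/
def wAvg (R : Set ℕ) (w : ℕ → ℝ) (β : ℝ) (N : ℕ) (f : UnitAddCircle → ℝ) : ℝ :=
  (∑ n ∈ Finset.range N, w n)⁻¹ *
    ∑ n ∈ Finset.range N, w n * f (((Nat.nth (· ∈ R) n : ℝ) * β : ℝ) : UnitAddCircle)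

/-- `μ` is the weak limit of the `w`-weighted empirical measures along `R` at `β`. -/
def IsWeightLimit (R : Set ℕ) (w : ℕ → ℝ) (β : ℝ) (μ : Measure UnitAddCircle) : Prop :=
  ∀ f : C(UnitAddCircle, ℝ),
    Tendsto (fun N => wAvg R w β N (fun x => f x)) atTop (𝓝 (∫ x, f x ∂μ))

/-- A good weight on `R` (indexed by the increasing enumeration of `R`). -/
def IsGoodWeight (R : Set ℕ) (w : ℕ → ℝ) : Prop :=
  (∀ n, 0 ≤ w n) ∧ ¬ Summable w ∧
    ∀ β : ℝ, ∃ μ : Measure UnitAddCircle, IsProbabilityMeasure μ ∧ IsWeightLimit R w β μ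

/-- Besicovitch-type seminorm `‖f‖₁ = limsup_N (1/N) ∑_{n<N} |f n|`. -/
def besic (f : ℕ → ℝ) : ℝ := Filter.limsup (fun N => (∑ n ∈ Finset.range N, |f n|) / N) atTop

/-- An integrable weight: approximable in `‖·‖₁` by bounded good weights. -/
def IntegrableWeight (R : Set ℕ) (w : ℕ → ℝ) : Prop :=
  ∀ ε > 0, ∃ v : ℕ → ℝ, IsGoodWeight R v ∧ (∃ C, ∀ n, v n ≤ C) ∧
    besic (fun n => v n - w n) < ε

/-- Total variation distance between two finite Borel measures on the torus. -/
def varDist (μ ν : Measure UnitAddCircle) : ℝ :=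
  ⨆ B : Set UnitAddCircle, ⨆ _ : MeasurableSet B, |(μ B).toReal - (ν B).toReal|

/-- `e(θ) = exp(2πiθ)`. -/
def eC (θ : ℝ) : ℂ := Complex.exp (2 * Real.pi * Complex.I * θ)

/-- `w(R(N)) = ∑_{r ∈ R(N)} w r`. -/
def wSum (R : Set ℕ) (w : ℕ → ℝ) (N : ℕ) : ℝ := ∑ r ∈ initSeg R N, w r

/-- `μ` is the weak limit of `(1/w(R(N))) ∑_{r ∈ R(N)} w r · δ_{rβ mod 1}`. -/
def IsWeightLimitR (R : Set ℕ) (w : ℕ → ℝ) (β : ℝ) (μ : Measure UnitAddCircle) : Prop :=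
  ∀ f : C(UnitAddCircle, ℝ),
    Tendsto
      (fun N => (wSum R w N)⁻¹ * ∑ r ∈ initSeg R N, w r * f (((r : ℝ) * β : ℝ) : UnitAddCircle))
      atTop (𝓝 (∫ x, f x ∂μ))

/-- `f : ℕ → ℂ` has mean `c`. -/
def HasMean (f : ℕ → ℂ) (c : ℂ) : Prop :=
  Tendsto (fun N => (∑ n ∈ Finset.range N, f n) / (N : ℂ)) atTop (𝓝 c)

/-- The seminorm `‖f‖_M = limsup_N |(1/N) ∑_{n<N} f n|`. -/
def meanSeminorm (f : ℕ → ℂ) : ℝ :=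
  Filter.limsup (fun N => ‖(∑ n ∈ Finset.range N, f n) / (N : ℂ)‖) atTop

end

section AuxProof

open MeasureTheory Filter Topology Set

/-- Any limit measure of an infinite set is a probability measure. -/
lemma aux_prob {S : Set ℕ} (hS : S.Infinite) {β : ℝ} {μ : MeasureTheory.Measure UnitAddCircle}
    (h : IsLimitMeasure S β μ) : IsProbabilityMeasure μ := by
  classical
  obtain ⟨s, hsS, hs1⟩ := hS.exists_gt 0
  have hev : ∀ᶠ N in atTop, empAvg S β N (fun x => (1 : C(UnitAddCircle, ℝ)) x) = 1 := by
    filter_upwards [eventually_ge_atTop s] with N hN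
    have hmem : s ∈ initSeg S N := by
      simp only [initSeg, Finset.mem_filter, Finset.mem_Icc]
      exact ⟨⟨hs1, hN⟩, hsS⟩
    have hcard : (initSeg S N).card ≠ 0 := by
      simp only [ne_eq, Finset.card_eq_zero]
      exact fun he => by simp [he] at hmem
    simp only [empAvg, ContinuousMap.one_apply, Finset.sum_const, nsmul_eq_mul, mul_one]
    exact inv_mul_cancel₀ (Nat.cast_ne_zero.mpr hcard)
  have h1 := h 1
  have h2 : Tendsto (fun N => empAvg S β N (fun x => (1 : C(UnitAddCircle, ℝ)) x)) atTop (𝓝 1) :=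
    tendsto_const_nhds.congr' (hev.mono fun N hN => hN.symm)
  have h3 : (1 : ℝ) = ∫ x, (1 : C(UnitAddCircle, ℝ)) x ∂μ := tendsto_nhds_unique h2 h1
  simp only [ContinuousMap.one_apply, integral_const, smul_eq_mul, mul_one] at h3
  refine ⟨?_⟩
  have := h3.symm
  rwa [measureReal_def, ENNReal.toReal_eq_one_iff] at this

lemma aux_cardR_le {R : Set ℕ} (hR : R.Infinite) {N : ℕ} (hN : 1 ≤ N) :
    (initSeg R (Nat.nth (· ∈ R) (N - 1))).card ≤ N := by
  classical
  set M := Nat.nth (· ∈ R) (N - 1) with hM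
  have hsub : initSeg R M ⊆ (Finset.range (M + 1)).filter (· ∈ R) := by
    intro x hx
    simp only [initSeg, Finset.mem_filter, Finset.mem_Icc] at hx
    simp only [Finset.mem_filter, Finset.mem_range]
    exact ⟨Nat.lt_succ_of_le hx.1.2, hx.2⟩
  calc (initSeg R M).card ≤ ((Finset.range (M + 1)).filter (· ∈ R)).card :=
        Finset.card_le_card hsub
    _ = Nat.count (· ∈ R) (M + 1) := by
        rw [Nat.count_eq_card_filter_range]
    _ = (N - 1) + 1 := Nat.count_nth_succ_of_infinite (p := (· ∈ R)) hR (N - 1)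
    _ = N := by omega

lemma aux_cardR_ge {R : Set ℕ} (hR : R.Infinite) (N : ℕ) :
    N - 1 ≤ (initSeg R (Nat.nth (· ∈ R) (N - 1))).card := by
  classical
  set M := Nat.nth (· ∈ R) (N - 1) with hM
  have : (Finset.Ico 1 N).card ≤ (initSeg R M).card := by
    apply Finset.card_le_card_of_injOn (Nat.nth (· ∈ R))
    · intro k hk
      simp only [Finset.mem_coe, Finset.mem_Ico] at hk ⊢
      simp only [initSeg, Finset.mem_filter, Finset.mem_Icc]
      refine ⟨⟨le_trans hk.1 (Nat.le_nth fun hf => absurd hf hR), ?_⟩,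
        Nat.nth_mem_of_infinite hR _⟩
      exact (Nat.nth_le_nth hR).2 (by omega)
    · exact fun a _ b _ hab => Nat.nth_injective hR hab
  simpa using this

lemma aux_relCount_le {R S : Set ℕ} (hR : R.Infinite) {N : ℕ} (hN : 1 ≤ N) :
    relCount R S N ≤ (initSeg S (Nat.nth (· ∈ R) (N - 1))).card + 1 := by
  classical
  set M := Nat.nth (· ∈ R) (N - 1) with hM
  have h1 : relCount R S N ≤ (insert 0 (initSeg S M)).card := by
    apply Finset.card_le_card_of_injOn (Nat.nth (· ∈ R))
    · intro n hn
      simp only [Finset.mem_coe, Finset.mem_filter, Finset.mem_range] at hn ⊢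
      rcases Nat.eq_zero_or_pos (Nat.nth (· ∈ R) n) with h0 | hpos
      · simp [h0]
      · refine Finset.mem_insert_of_mem ?_
        simp only [initSeg, Finset.mem_filter, Finset.mem_Icc]
        exact ⟨⟨hpos, (Nat.nth_le_nth hR).2 (by omega)⟩, hn.2⟩
    · exact fun a _ b _ hab => Nat.nth_injective hR hab
  exact h1.trans (Finset.card_insert_le _ _)

lemma aux_card_mul_empAvg (S : Set ℕ) (β : ℝ) (N : ℕ) (g : UnitAddCircle → ℝ) :
    ((initSeg S N).card : ℝ) * empAvg S β N g
      = ∑ s ∈ initSeg S N, g (((s : ℝ) * β : ℝ) : UnitAddCircle) := by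
  rcases Nat.eq_zero_or_pos (initSeg S N).card with h | h
  · rw [Finset.card_eq_zero] at h
    simp [empAvg, h]
  · rw [empAvg, ← mul_assoc, mul_inv_cancel₀ (Nat.cast_ne_zero.mpr h.ne'), one_mul]

lemma aux_empAvg_nonneg {S : Set ℕ} {β : ℝ} {N : ℕ} {g : UnitAddCircle → ℝ}
    (hg : ∀ x, 0 ≤ g x) : 0 ≤ empAvg S β N g :=
  mul_nonneg (inv_nonneg.mpr (Nat.cast_nonneg _)) (Finset.sum_nonneg fun _ _ => hg _)

lemma aux_empAvg_le_norm (S : Set ℕ) (β : ℝ) (N : ℕ) (f : C(UnitAddCircle, ℝ)) :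
    empAvg S β N (fun x => f x) ≤ ‖f‖ := by
  rcases Nat.eq_zero_or_pos (initSeg S N).card with h | h
  · rw [Finset.card_eq_zero] at h
    simp [empAvg, h, norm_nonneg]
  · have hsum : ∑ s ∈ initSeg S N, f (((s : ℝ) * β : ℝ) : UnitAddCircle)
        ≤ (initSeg S N).card • ‖f‖ :=
      Finset.sum_le_card_nsmul _ _ _ fun x _ => (le_abs_self _).trans (f.norm_coe_le_norm _)
    rw [empAvg]
    calc ((initSeg S N).card : ℝ)⁻¹ * ∑ s ∈ initSeg S N, f (((s : ℝ) * β : ℝ) : UnitAddCircle)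
        ≤ ((initSeg S N).card : ℝ)⁻¹ * ((initSeg S N).card • ‖f‖) :=
          mul_le_mul_of_nonneg_left hsum (inv_nonneg.mpr (Nat.cast_nonneg _))
      _ = ‖f‖ := by
          rw [nsmul_eq_mul, ← mul_assoc, inv_mul_cancel₀ (Nat.cast_ne_zero.mpr h.ne'), one_mul]

lemma aux_key {R S : Set ℕ} (hRinf : R.Infinite) (hSR : S ⊆ R)
    {β : ℝ} {μR μS : MeasureTheory.Measure UnitAddCircle}
    (hμR : IsLimitMeasure R β μR) (hμS : IsLimitMeasure S β μS)
    (f : C(UnitAddCircle, ℝ)) (hf : ∀ x, 0 ≤ f x) :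
    (Filter.limsup (fun N => (relCount R S N : ℝ) / N) atTop) * ∫ x, f x ∂μS
      ≤ ∫ x, f x ∂μR := by
  classical
  set d := Filter.limsup (fun N => (relCount R S N : ℝ) / N) atTop with hd
  set IS := ∫ x, f x ∂μS with hIS'
  set IR := ∫ x, f x ∂μR with hIR'
  have hIS : 0 ≤ IS := integral_nonneg fun x => hf x
  have hIR : 0 ≤ IR := integral_nonneg fun x => hf x
  have hstep : ∀ ε > (0 : ℝ), (d - ε) * IS ≤ IR := by
    intro ε hε
    rcases le_or_gt d ε with hde | hde
    · exact le_trans (mul_nonpos_of_nonpos_of_nonneg (by linarith) hIS) hIR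
    · set M : ℕ → ℕ := fun N => Nat.nth (· ∈ R) (N - 1) with hMdef
      have hMtend : Tendsto M atTop atTop := by
        apply tendsto_atTop_mono (fun N => Nat.le_nth fun hfin => absurd hfin hRinf)
        exact tendsto_sub_atTop_nat 1
      have hRtend : Tendsto (fun N => empAvg R β (M N) (fun x => f x)) atTop (𝓝 IR) :=
        (hμR f).comp hMtend
      have hStend : Tendsto (fun N => empAvg S β (M N) (fun x => f x)) atTop (𝓝 IS) :=
        (hμS f).comp hMtend
      have hNtend : Tendsto (fun N : ℕ => ‖f‖ / ((N - 1 : ℕ) : ℝ)) atTop (𝓝 0) :=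
        Tendsto.div_atTop tendsto_const_nhds
          (tendsto_natCast_atTop_atTop.comp (tendsto_sub_atTop_nat 1))
      have hg : Tendsto (fun N => empAvg R β (M N) (fun x => f x) + ‖f‖ / ((N - 1 : ℕ) : ℝ)
          - (d - ε) * empAvg S β (M N) (fun x => f x)) atTop (𝓝 (IR + 0 - (d - ε) * IS)) :=
        (hRtend.add hNtend).sub (hStend.const_mul _)
      have hcob : Filter.IsCoboundedUnder (· ≤ ·) atTop
          (fun N => (relCount R S N : ℝ) / N) :=
        Filter.IsBoundedUnder.isCoboundedUnder_flip
          (Filter.isBoundedUnder_of ⟨0, fun N => by positivity⟩)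
      have hfreq : ∃ᶠ N in atTop, d - ε < (relCount R S N : ℝ) / N :=
        Filter.frequently_lt_of_lt_limsup hcob (by linarith)
      have hfreq2 : ∃ᶠ N in atTop, 0 ≤ empAvg R β (M N) (fun x => f x)
          + ‖f‖ / ((N - 1 : ℕ) : ℝ) - (d - ε) * empAvg S β (M N) (fun x => f x) := by
        refine (hfreq.and_eventually (eventually_ge_atTop 2)).mono ?_
        rintro N ⟨hN1, hN2⟩
        set m := M N with hm
        set eS := empAvg S β m (fun x => f x) with heS
        set eR := empAvg R β m (fun x => f x) with heR
        set cS := ((initSeg S m).card : ℝ) with hcS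
        set cR := ((initSeg R m).card : ℝ) with hcR
        have hN0 : (0 : ℝ) < N := by positivity
        have h4 : (d - ε) * N < (relCount R S N : ℝ) := by
          rw [div_eq_mul_inv] at hN1
          calc (d - ε) * N < ((relCount R S N : ℝ) * (N : ℝ)⁻¹) * N :=
                mul_lt_mul_of_pos_right hN1 hN0
            _ = (relCount R S N : ℝ) := by field_simp
        have h5 : (relCount R S N : ℝ) ≤ cS + 1 := by
          have := aux_relCount_le (S := S) hRinf (show 1 ≤ N by omega)
          rw [hcS]
          exact_mod_cast this
        have h6 : cR ≤ N := by
          have := aux_cardR_le hRinf (show 1 ≤ N by omega)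
          rw [hcR]
          exact_mod_cast this
        have h7 : ((N - 1 : ℕ) : ℝ) ≤ cR := by
          have := aux_cardR_ge hRinf N
          rw [hcR]
          exact_mod_cast this
        have hn1 : (1 : ℝ) ≤ ((N - 1 : ℕ) : ℝ) := by
          have : (1 : ℕ) ≤ N - 1 := by omega
          exact_mod_cast this
        have hcR0 : (0 : ℝ) < cR := lt_of_lt_of_le (lt_of_lt_of_le one_pos hn1) h7
        have h8 : 0 ≤ eS := aux_empAvg_nonneg fun x => hf x
        have h9 : eS ≤ ‖f‖ := aux_empAvg_le_norm S β m f
        have hc1 : cS * eS = ∑ s ∈ initSeg S m, f (((s : ℝ) * β : ℝ) : UnitAddCircle) :=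
          aux_card_mul_empAvg S β m _
        have hc2 : cR * eR = ∑ s ∈ initSeg R m, f (((s : ℝ) * β : ℝ) : UnitAddCircle) :=
          aux_card_mul_empAvg R β m _
        have hsub : initSeg S m ⊆ initSeg R m := by
          intro x hx
          simp only [initSeg, Finset.mem_filter, Finset.mem_Icc] at hx ⊢
          exact ⟨hx.1, hSR hx.2⟩
        have hSsum : ∑ s ∈ initSeg S m, f (((s : ℝ) * β : ℝ) : UnitAddCircle)
            ≤ ∑ s ∈ initSeg R m, f (((s : ℝ) * β : ℝ) : UnitAddCircle) :=
          Finset.sum_le_sum_of_subset_of_nonneg hsub fun i _ _ => hf _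
        have e1 : (d - ε) * cR ≤ (d - ε) * (N : ℝ) :=
          mul_le_mul_of_nonneg_left h6 (by linarith)
        have e2 : (d - ε) * (N : ℝ) ≤ cS + 1 := le_of_lt (lt_of_lt_of_le h4 h5)
        have e3 : (d - ε) * cR * eS ≤ (cS + 1) * eS :=
          mul_le_mul_of_nonneg_right (e1.trans e2) h8
        have e5 : (d - ε) * cR * eS ≤ cR * eR + ‖f‖ := by nlinarith
        have e6 : (d - ε) * eS ≤ eR + ‖f‖ / cR := by
          rw [← sub_nonneg]
          have : eR + ‖f‖ / cR - (d - ε) * eS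
              = (cR * eR + ‖f‖ - (d - ε) * cR * eS) / cR := by
            field_simp
          rw [this]
          exact div_nonneg (by linarith) hcR0.le
        have e7 : ‖f‖ / cR ≤ ‖f‖ / ((N - 1 : ℕ) : ℝ) :=
          div_le_div_of_nonneg_left (norm_nonneg f) (by linarith) h7
        linarith
      by_contra hcon
      push_neg at hcon
      have hev : ∀ᶠ N in atTop, empAvg R β (M N) (fun x => f x) + ‖f‖ / ((N - 1 : ℕ) : ℝ)
          - (d - ε) * empAvg S β (M N) (fun x => f x) < 0 :=
        hg.eventually (Iio_mem_nhds (by linarith))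
      obtain ⟨N, h1, h2⟩ := (hfreq2.and_eventually hev).exists
      linarith
  rcases eq_or_lt_of_le hIS with h0 | hIS0
  · rw [← h0, mul_zero]
    exact hIR
  · by_contra hcon
    push_neg at hcon
    have hε : 0 < (d * IS - IR) / (2 * IS) := div_pos (by linarith) (by positivity)
    have h2 := hstep _ hε
    have heq : (d - (d * IS - IR) / (2 * IS)) * IS = d * IS - (d * IS - IR) / 2 := by
      field_simp
    rw [heq] at h2
    linarith

lemma aux_measure_le {μ ν : MeasureTheory.Measure UnitAddCircle}
    [IsFiniteMeasure μ] [IsFiniteMeasure ν] {c : ℝ} (hc : 0 ≤ c)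
    (h : ∀ f : C(UnitAddCircle, ℝ), (∀ x, 0 ≤ f x) → ∫ x, f x ∂μ ≤ c * ∫ x, f x ∂ν) :
    μ ≤ c.toNNReal • ν := by
  have hopen : ∀ U : Set UnitAddCircle, IsOpen U → μ U ≤ (c.toNNReal • ν) U := by
    intro U hU
    by_contra hlt
    push_neg at hlt
    obtain ⟨F, hFU, hFc, hFr⟩ :=
      MeasureTheory.Measure.WeaklyRegular.innerRegular hU _ hlt
    obtain ⟨f, hf1, hf0, -, hficc⟩ :=
      exists_continuous_one_zero_of_isCompact hFc.isCompact hU.isClosed_compl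
        (Set.disjoint_left.mpr fun x hxF hxU => hxU (hFU hxF))
    have hfint : Integrable (fun x => f x) μ :=
      f.continuous.integrable_of_hasCompactSupport (HasCompactSupport.of_compactSpace _)
    have hfint' : Integrable (fun x => f x) ν :=
      f.continuous.integrable_of_hasCompactSupport (HasCompactSupport.of_compactSpace _)
    have hFmeas : MeasurableSet F := hFc.measurableSet
    have hUmeas : MeasurableSet U := hU.measurableSet
    have hi1 : (μ F).toReal ≤ ∫ x, f x ∂μ := by
      rw [← measureReal_def, ← integral_indicator_one hFmeas]
      apply integral_mono ((integrable_const (1 : ℝ)).indicator hFmeas) hfint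
      intro x
      by_cases hx : x ∈ F
      · have h1x : f x = 1 := hf1 hx
        simp [Set.indicator_of_mem hx, h1x]
      · simp [Set.indicator_of_notMem hx, (hficc x).1]
    have hi2 : ∫ x, f x ∂ν ≤ (ν U).toReal := by
      rw [← measureReal_def, ← integral_indicator_one hUmeas]
      apply integral_mono hfint' ((integrable_const (1 : ℝ)).indicator hUmeas)
      intro x
      by_cases hx : x ∈ U
      · simp [Set.indicator_of_mem hx, (hficc x).2]
      · have : f x = 0 := hf0 hx
        simp [Set.indicator_of_notMem hx, this]
    have hreal : (μ F).toReal ≤ c * (ν U).toReal :=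
      le_trans (hi1.trans (h f fun x => (hficc x).1)) (mul_le_mul_of_nonneg_left hi2 hc)
    have hEN : μ F ≤ (c.toNNReal • ν) U := by
      have := ENNReal.ofReal_le_ofReal hreal
      rw [ENNReal.ofReal_toReal (measure_ne_top μ F), ENNReal.ofReal_mul hc,
        ENNReal.ofReal_toReal (measure_ne_top ν U)] at this
      simpa [ENNReal.ofReal] using this
    exact absurd (lt_of_le_of_lt hEN hFr) (lt_irrefl _)
  refine MeasureTheory.Measure.le_iff.mpr fun s hs => ?_
  calc μ s ≤ ⨅ (U : Set UnitAddCircle) (_ : s ⊆ U) (_ : IsOpen U), (c.toNNReal • ν) U :=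
        le_iInf fun U => le_iInf fun hsU => le_iInf fun hUo =>
          (measure_mono hsU).trans (hopen U hUo)
    _ = (c.toNNReal • ν) s := (Set.measure_eq_iInf_isOpen s _).symm

lemma aux_rnDeriv {μ ν : MeasureTheory.Measure UnitAddCircle}
    [IsFiniteMeasure ν] [IsFiniteMeasure μ] {c : NNReal} (hc : c ≠ 0)
    (h : ν ≤ c • μ) : ∀ᵐ x ∂μ, ν.rnDeriv μ x ≤ (c : ENNReal) := by
  have h1 : ν.rnDeriv (c • μ) ≤ᵐ[(c • μ)] 1 := MeasureTheory.Measure.rnDeriv_le_one_of_le h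
  have h2 : ν.rnDeriv (c • μ) =ᵐ[μ] c⁻¹ • ν.rnDeriv μ :=
    haveI : ν.HaveLebesgueDecomposition μ := MeasureTheory.Measure.haveLebesgueDecomposition_of_sigmaFinite ν μ
    MeasureTheory.Measure.rnDeriv_smul_right ν μ hc
  have h1' : ν.rnDeriv (c • μ) ≤ᵐ[μ] 1 := by
    have hac : (μ : MeasureTheory.Measure UnitAddCircle) ≪ c • μ := by
      refine MeasureTheory.Measure.AbsolutelyContinuous.mk fun s hs h0 => ?_
      simpa [hc] using h0
    exact hac.ae_le h1
  filter_upwards [h1', h2] with x hx1 hx2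
  have h3 : (c⁻¹ : NNReal) • ν.rnDeriv μ x ≤ 1 := by
    have := hx2 ▸ hx1; simpa using this
  have hcc : (c : ENNReal) * ((c⁻¹ : NNReal) : ENNReal) = 1 := by
    rw [← ENNReal.coe_mul, mul_inv_cancel₀ hc, ENNReal.coe_one]
  calc ν.rnDeriv μ x = ((c : ENNReal) * ((c⁻¹ : NNReal) : ENNReal)) * ν.rnDeriv μ x := by
        rw [hcc, one_mul]
    _ = (c : ENNReal) * (((c⁻¹ : NNReal) : ENNReal) * ν.rnDeriv μ x) := mul_assoc _ _ _
    _ ≤ (c : ENNReal) * 1 := mul_le_mul_right (by simpa [ENNReal.smul_def] using h3) _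
    _ = c := mul_one _

end AuxProof

/-- a good subset `S ⊆ R` of positive relative upper density has limit measures
absolutely continuous with respect to those of `R`, with Radon–Nikodym derivative bounded by
the reciprocal of the relative upper density. -/
theorem positive_density_absolutelyContinuous (R : Set ℕ) (hR : IsGoodSet R)
    (hsub : Sublacunary R) (S : Set ℕ) (hSR : S ⊆ R) (hS : IsGoodSet S)
    (hd : 0 < Filter.limsup (fun N => (relCount R S N : ℝ) / N) atTop) :
    ∀ β : ℝ, Irrational β →
      ∀ μR μS : MeasureTheory.Measure UnitAddCircle,
        IsLimitMeasure R β μR → IsLimitMeasure S β μS →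
          μS ≪ μR ∧
          ∀ᵐ x ∂μR, μS.rnDeriv μR x ≤
            ENNReal.ofReal (1 / Filter.limsup (fun N => (relCount R S N : ℝ) / N) atTop) := by
  classical
  intro β hβ μR μS hLR hLS
  haveI hPR : IsProbabilityMeasure μR := aux_prob hR.1 hLR
  haveI hPS : IsProbabilityMeasure μS := aux_prob hS.1 hLS
  set d := Filter.limsup (fun N => (relCount R S N : ℝ) / N) atTop with hdd
  have hkey : ∀ f : C(UnitAddCircle, ℝ), (∀ x, 0 ≤ f x) →
      ∫ x, f x ∂μS ≤ (1 / d) * ∫ x, f x ∂μR := by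
    intro f hf
    have h := aux_key hR.1 hSR hLR hLS f hf
    rw [one_div, ← div_eq_inv_mul, le_div_iff₀ hd]
    linarith
  have hle : μS ≤ (1 / d).toNNReal • μR := aux_measure_le (by positivity) hkey
  have hc0 : (1 / d).toNNReal ≠ 0 := by
    simp only [ne_eq, Real.toNNReal_eq_zero, not_le]
    positivity
  constructor
  · refine MeasureTheory.Measure.AbsolutelyContinuous.mk fun s hs h0 => ?_
    have h1 := hle s
    rw [MeasureTheory.Measure.smul_apply, h0, smul_zero] at h1
    exact nonpos_iff_eq_zero.mp h1
  · have h2 := aux_rnDeriv hc0 hle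
    simpa [ENNReal.ofReal] using h2
end

section
/- Let R ⊆ ℕ be a good set and let w be a good, integrable weight supported on R which satisfies ‖w‖_{1,R} > 0, i.e. limsup_N (1/N) Σ_{n≤N} w(n) > 0 (indexing w by the increasing enumeration (r_n) of R). Then for every β ∈ ℝ the limit measure μ_{w,β} is absolutely continuous with respect to μ_{R,β}. -/
open MeasureTheory Filter Topology
open scoped BigOperators

namespace AuxAC

open Finset
open Classical in
lemma nth_pos_iff {R : Set ℕ} (hR : {n | n ∈ R}.Infinite) (n : ℕ) :
    1 ≤ Nat.nth (· ∈ R) n ↔ (if (0:ℕ) ∈ R then 1 else 0) ≤ n := by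
  constructor
  · intro h
    split_ifs with h0
    · by_contra hn
      have hn0 : n = 0 := by omega
      subst hn0
      have : Nat.nth (· ∈ R) 0 = 0 := by
        rw [Nat.nth_zero]
        exact Nat.sInf_eq_zero.mpr (Or.inl h0)
      omega
    · omega
  · intro h
    by_contra hlt
    have h0 : Nat.nth (· ∈ R) n = 0 := by omega
    have hmem : (0:ℕ) ∈ R := by
      have := Nat.nth_mem_of_infinite hR n
      rwa [h0] at this
    simp only [hmem, if_true] at h
    have : Nat.nth (· ∈ R) 0 < Nat.nth (· ∈ R) n := (Nat.nth_lt_nth hR).2 (by omega)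
    omega

open Classical in
lemma initSeg_eq_image {R : Set ℕ} (hR : {n | n ∈ R}.Infinite) {N : ℕ} (hN : 1 ≤ N) :
    initSeg R (Nat.nth (· ∈ R) (N - 1)) =
      (Finset.Ico (if (0:ℕ) ∈ R then 1 else 0) N).image (Nat.nth (· ∈ R)) := by
  ext r
  simp only [initSeg, Finset.mem_filter, Finset.mem_Icc, Finset.mem_image, Finset.mem_Ico]
  constructor
  · rintro ⟨⟨h1, h2⟩, hrR⟩
    obtain ⟨n, rfl⟩ := Nat.subset_range_nth hrR
    refine ⟨n, ⟨(nth_pos_iff hR n).1 h1, ?_⟩, rfl⟩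
    have := (Nat.nth_le_nth hR).1 h2
    omega
  · rintro ⟨n, ⟨hne, hnN⟩, rfl⟩
    have hmem : Nat.nth (· ∈ R) n ∈ R := Nat.nth_mem_of_infinite hR n
    exact ⟨⟨(nth_pos_iff hR n).2 hne, (Nat.nth_le_nth hR).2 (by omega)⟩, hmem⟩

open Classical in
lemma initSeg_card_eq {R : Set ℕ} (hR : {n | n ∈ R}.Infinite) {N : ℕ} (hN : 1 ≤ N) :
    (initSeg R (Nat.nth (· ∈ R) (N - 1))).card = N - (if (0:ℕ) ∈ R then 1 else 0) := by
  rw [initSeg_eq_image hR hN, Finset.card_image_of_injective _ (Nat.nth_injective hR),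
    Nat.card_Ico]

open Classical in
lemma initSeg_sum_eq {R : Set ℕ} (hR : {n | n ∈ R}.Infinite) {N : ℕ} (hN : 1 ≤ N)
    (g : ℕ → ℝ) :
    ∑ r ∈ initSeg R (Nat.nth (· ∈ R) (N - 1)), g r
      = ∑ n ∈ Finset.Ico (if (0:ℕ) ∈ R then 1 else 0) N, g (Nat.nth (· ∈ R) n) := by
  rw [initSeg_eq_image hR hN, Finset.sum_image]
  intro a _ b _ h
  exact Nat.nth_injective hR h

lemma initSeg_mono (R : Set ℕ) {M N : ℕ} (h : M ≤ N) : initSeg R M ⊆ initSeg R N := by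
  classical
  intro r hr
  simp only [initSeg, Finset.mem_filter, Finset.mem_Icc] at hr ⊢
  exact ⟨⟨hr.1.1, hr.1.2.trans h⟩, hr.2⟩

end AuxAC

namespace AuxAC

lemma inv_nat_tendsto : Filter.Tendsto (fun N : ℕ => (N : ℝ)⁻¹) Filter.atTop (𝓝 0) :=
  tendsto_inv_atTop_nhds_zero_nat

lemma nth_tendsto {R : Set ℕ} (hR : {n | n ∈ R}.Infinite) :
    Filter.Tendsto (fun N => Nat.nth (· ∈ R) (N - 1)) Filter.atTop Filter.atTop := by
  apply Filter.tendsto_atTop_mono (fun N => ?_) (Filter.tendsto_sub_atTop_nat 1)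
  exact (Nat.nth_strictMono hR).le_apply

open Classical in
lemma card_initSeg_tendsto {R : Set ℕ} (hR : {n | n ∈ R}.Infinite) :
    Filter.Tendsto (fun N => (initSeg R N).card) Filter.atTop Filter.atTop := by
  have hmono : Monotone fun N => (initSeg R N).card :=
    fun M N h => Finset.card_le_card (initSeg_mono R h)
  apply Filter.tendsto_atTop_atTop.2
  intro b
  refine ⟨Nat.nth (· ∈ R) (b + 2 - 1), fun a ha => ?_⟩
  have h1 : (initSeg R (Nat.nth (· ∈ R) (b + 2 - 1))).card
      = b + 2 - (if (0:ℕ) ∈ R then 1 else 0) := initSeg_card_eq hR (by omega)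
  have h2 : (initSeg R (Nat.nth (· ∈ R) (b + 2 - 1))).card ≤ (initSeg R a).card := hmono ha
  rw [h1] at h2
  split_ifs at h2 <;> omega

/-- Convergence of the plain averages along the enumeration of `R`. -/
lemma avg_tendsto {R : Set ℕ} (hR : {n | n ∈ R}.Infinite) (β : ℝ)
    (μR : MeasureTheory.Measure UnitAddCircle) (h : IsLimitMeasure R β μR)
    (f : C(UnitAddCircle, ℝ)) :
    Filter.Tendsto
      (fun N : ℕ => (N : ℝ)⁻¹ *
        ∑ n ∈ Finset.range N, f (((Nat.nth (· ∈ R) n : ℝ) * β : ℝ) : UnitAddCircle))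
      Filter.atTop (𝓝 (∫ x, f x ∂μR)) := by
  classical
  set g : ℕ → ℝ := fun n => f (((Nat.nth (· ∈ R) n : ℝ) * β : ℝ) : UnitAddCircle) with hg
  set e : ℕ := if (0:ℕ) ∈ R then 1 else 0 with he
  set c : ℝ := ∑ n ∈ Finset.range e, g n with hc
  set A : ℕ → ℝ := fun N => empAvg R β (Nat.nth (· ∈ R) (N - 1)) (fun x => f x) with hA
  have hAlim : Filter.Tendsto A Filter.atTop (𝓝 (∫ x, f x ∂μR)) :=
    (h f).comp (nth_tendsto hR)
  have he1 : e ≤ 1 := by rw [he]; split_ifs <;> omega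
  have key : ∀ N : ℕ, 2 ≤ N →
      (N : ℝ)⁻¹ * ∑ n ∈ Finset.range N, g n
        = c * (N : ℝ)⁻¹ + (1 - (e : ℝ) * (N : ℝ)⁻¹) * A N := by
    intro N hN
    have hcard : (initSeg R (Nat.nth (· ∈ R) (N - 1))).card = N - e :=
      initSeg_card_eq hR (by omega)
    have hsum : ∑ r ∈ initSeg R (Nat.nth (· ∈ R) (N - 1)),
        f (((r : ℝ) * β : ℝ) : UnitAddCircle) = ∑ n ∈ Finset.Ico e N, g n :=
      initSeg_sum_eq hR (by omega) _
    have hsplit : ∑ n ∈ Finset.range N, g n = c + ∑ n ∈ Finset.Ico e N, g n := by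
      rw [hc, ← Finset.sum_range_add_sum_Ico g (show e ≤ N by omega)]
    have hANe : A N = ((N - e : ℕ) : ℝ)⁻¹ * ∑ n ∈ Finset.Ico e N, g n := by
      rw [hA]; simp only [empAvg, hcard, hsum]
    have hcast : ((N - e : ℕ) : ℝ) = (N : ℝ) - (e : ℝ) := by
      rw [Nat.cast_sub (by omega)]
    have hNe0 : (N : ℝ) - (e : ℝ) ≠ 0 := by
      have h2 : (2 : ℝ) ≤ (N : ℝ) := by exact_mod_cast hN
      have h1 : (e : ℝ) ≤ 1 := by exact_mod_cast he1
      linarith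
    have hN0 : (N : ℝ) ≠ 0 := by
      have h2 : (2 : ℝ) ≤ (N : ℝ) := by exact_mod_cast hN
      linarith
    rw [hsplit, hANe, hcast]
    field_simp
  refine Filter.Tendsto.congr' ?_ (f₁ := fun N : ℕ => c * (N : ℝ)⁻¹ + (1 - (e : ℝ) * (N : ℝ)⁻¹) * A N) ?_
  · filter_upwards [Filter.eventually_ge_atTop 2] with N hN
    exact (key N hN).symm
  · have h1 : Filter.Tendsto (fun N : ℕ => c * (N : ℝ)⁻¹) Filter.atTop (𝓝 0) := by
      simpa using (inv_nat_tendsto.const_mul c)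
    have h2 : Filter.Tendsto (fun N : ℕ => 1 - (e : ℝ) * (N : ℝ)⁻¹) Filter.atTop (𝓝 1) := by
      have := (inv_nat_tendsto.const_mul (e : ℝ)).const_sub 1
      simpa using this
    have := h1.add (h2.mul hAlim)
    simpa using this

end AuxAC

namespace AuxAC

lemma integral_one_eq_one_of_isLimitMeasure {R : Set ℕ} (hR : {n | n ∈ R}.Infinite) {β : ℝ}
    {μR : MeasureTheory.Measure UnitAddCircle} (h : IsLimitMeasure R β μR) :
    (μR Set.univ).toReal = 1 := by
  have hf := h (ContinuousMap.const _ (1 : ℝ))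
  have hev : ∀ᶠ N in Filter.atTop,
      empAvg R β N (fun x => (ContinuousMap.const UnitAddCircle (1:ℝ)) x) = 1 := by
    filter_upwards [(card_initSeg_tendsto hR).eventually_ge_atTop 1] with N hN
    have hc : ((initSeg R N).card : ℝ) ≠ 0 := by
      have : (1:ℝ) ≤ ((initSeg R N).card : ℝ) := by exact_mod_cast hN
      linarith
    simp only [empAvg, ContinuousMap.const_apply, Finset.sum_const, nsmul_eq_mul, mul_one]
    field_simp
  have h1 : Filter.Tendsto (fun N => empAvg R β N
      (fun x => (ContinuousMap.const UnitAddCircle (1:ℝ)) x)) Filter.atTop (𝓝 1) :=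
    Filter.Tendsto.congr' (by filter_upwards [hev] with N hN; exact hN.symm) tendsto_const_nhds
  have := tendsto_nhds_unique hf h1
  exact (by simpa [MeasureTheory.integral_const] using this : _ = (1:ℝ))

lemma isFiniteMeasure_of_isLimitMeasure {R : Set ℕ} (hR : {n | n ∈ R}.Infinite) {β : ℝ}
    {μR : MeasureTheory.Measure UnitAddCircle} (h : IsLimitMeasure R β μR) :
    MeasureTheory.IsFiniteMeasure μR := by
  constructor
  by_contra hc
  push_neg at hc
  have h2 := integral_one_eq_one_of_isLimitMeasure hR h
  rw [top_le_iff.1 hc] at h2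
  simp at h2

lemma integral_one_eq_one_of_isWeightLimit {R : Set ℕ} {w : ℕ → ℝ} (hw0 : ∀ n, 0 ≤ w n)
    (hwns : ¬ Summable w) {β : ℝ}
    {μ : MeasureTheory.Measure UnitAddCircle} (h : IsWeightLimit R w β μ) :
    (μ Set.univ).toReal = 1 := by
  have hsum : Filter.Tendsto (fun N => ∑ n ∈ Finset.range N, w n) Filter.atTop Filter.atTop :=
    (not_summable_iff_tendsto_nat_atTop_of_nonneg hw0).1 hwns
  have hf := h (ContinuousMap.const _ (1 : ℝ))
  have hev : ∀ᶠ N in Filter.atTop,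
      wAvg R w β N (fun x => (ContinuousMap.const UnitAddCircle (1:ℝ)) x) = 1 := by
    filter_upwards [hsum.eventually_ge_atTop 1] with N hN
    have hc : (∑ n ∈ Finset.range N, w n) ≠ 0 := by linarith
    simp only [wAvg, ContinuousMap.const_apply, mul_one]
    field_simp
  have h1 : Filter.Tendsto (fun N => wAvg R w β N
      (fun x => (ContinuousMap.const UnitAddCircle (1:ℝ)) x)) Filter.atTop (𝓝 1) :=
    Filter.Tendsto.congr' (by filter_upwards [hev] with N hN; exact hN.symm) tendsto_const_nhds
  have := tendsto_nhds_unique hf h1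
  exact (by simpa [MeasureTheory.integral_const] using this : _ = (1:ℝ))

lemma isFiniteMeasure_of_isWeightLimit {R : Set ℕ} {w : ℕ → ℝ} (hw0 : ∀ n, 0 ≤ w n)
    (hwns : ¬ Summable w) {β : ℝ}
    {μ : MeasureTheory.Measure UnitAddCircle} (h : IsWeightLimit R w β μ) :
    MeasureTheory.IsFiniteMeasure μ := by
  constructor
  by_contra hc
  push_neg at hc
  have h2 := integral_one_eq_one_of_isWeightLimit hw0 hwns h
  rw [top_le_iff.1 hc] at h2
  simp at h2

end AuxAC

namespace AuxAC

open Filter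

lemma besic_sInf (f : ℕ → ℝ) :
    besic f = sInf {a : ℝ | ∀ᶠ N : ℕ in atTop, (∑ n ∈ Finset.range N, |f n|) / N ≤ a} := by
  rw [besic, Filter.limsup_eq]

lemma besic_set_nonempty_of_pos {w : ℕ → ℝ} (hpos : 0 < besic w) :
    ∃ b : ℝ, ∀ᶠ N : ℕ in atTop, (∑ n ∈ Finset.range N, |w n|) / N ≤ b := by
  by_contra hc
  push_neg at hc
  have hempty : {a : ℝ | ∀ᶠ N : ℕ in atTop, (∑ n ∈ Finset.range N, |w n|) / N ≤ a} = ∅ := by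
    ext a
    simp only [Set.mem_setOf_eq, Set.mem_empty_iff_false, iff_false]
    intro ha
    exact absurd ha (Filter.not_eventually.2 ((hc a).mono fun N hN => not_le.2 hN))
  rw [besic_sInf, hempty, Real.sInf_empty] at hpos
  exact lt_irrefl _ hpos

lemma besic_bddBelow (w : ℕ → ℝ) :
    BddBelow {a : ℝ | ∀ᶠ N : ℕ in atTop, (∑ n ∈ Finset.range N, |w n|) / N ≤ a} := by
  refine ⟨0, fun a ha => ?_⟩
  obtain ⟨N, hN1, hN⟩ := (ha.and (eventually_ge_atTop 1)).exists
  have h0 : (0:ℝ) ≤ (∑ n ∈ Finset.range N, |w n|) / N := by positivity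
  linarith

lemma besic_frequently {w : ℕ → ℝ} (hw0 : ∀ n, 0 ≤ w n) (hpos : 0 < besic w) :
    ∃ᶠ N : ℕ in atTop, besic w / 2 * N ≤ ∑ n ∈ Finset.range N, w n := by
  by_contra hc
  rw [Filter.not_frequently] at hc
  have hmem : besic w / 2 ∈
      {a : ℝ | ∀ᶠ N : ℕ in atTop, (∑ n ∈ Finset.range N, |w n|) / N ≤ a} := by
    filter_upwards [hc, eventually_ge_atTop 1] with N hN hN1
    push_neg at hN
    have habs : ∑ n ∈ Finset.range N, |w n| = ∑ n ∈ Finset.range N, w n :=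
      Finset.sum_congr rfl fun n _ => abs_of_nonneg (hw0 n)
    have hNpos : (0:ℝ) < N := by exact_mod_cast hN1
    rw [habs, div_le_iff₀ hNpos]
    linarith
  have := csInf_le (besic_bddBelow w) hmem
  rw [← besic_sInf] at this
  linarith

lemma besic_eventually_le {w v : ℕ → ℝ} (hw0 : ∀ n, 0 ≤ w n) (hpos : 0 < besic w)
    (hv0 : ∀ n, 0 ≤ v n) {C : ℝ} (hC : ∀ n, v n ≤ C) {ε : ℝ} (hε : 0 < ε)
    (hlt : besic (fun n => v n - w n) < ε) :
    ∀ᶠ N : ℕ in atTop, ∑ n ∈ Finset.range N, |v n - w n| ≤ ε * N := by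
  obtain ⟨b, hb⟩ := besic_set_nonempty_of_pos hpos
  have hne : {a : ℝ | ∀ᶠ N : ℕ in atTop,
      (∑ n ∈ Finset.range N, |v n - w n|) / N ≤ a}.Nonempty := by
    refine ⟨max C 0 + max b 0, ?_⟩
    filter_upwards [hb, eventually_ge_atTop 1] with N hbN hN1
    have hNpos : (0:ℝ) < N := by exact_mod_cast hN1
    have h1 : ∑ n ∈ Finset.range N, |v n - w n|
        ≤ C * N + ∑ n ∈ Finset.range N, |w n| := by
      have : ∀ n ∈ Finset.range N, |v n - w n| ≤ C + |w n| := by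
        intro n _
        have := abs_sub (v n) (w n)
        have h2 : |v n| ≤ C := by rw [abs_of_nonneg (hv0 n)]; exact hC n
        calc |v n - w n| ≤ |v n| + |w n| := abs_sub _ _
          _ ≤ C + |w n| := by linarith
      calc ∑ n ∈ Finset.range N, |v n - w n| ≤ ∑ n ∈ Finset.range N, (C + |w n|) :=
            Finset.sum_le_sum this
        _ = C * N + ∑ n ∈ Finset.range N, |w n| := by
            rw [Finset.sum_add_distrib, Finset.sum_const, Finset.card_range,
              nsmul_eq_mul, mul_comm]
    have h3 : (∑ n ∈ Finset.range N, |v n - w n|) / N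
        ≤ C + (∑ n ∈ Finset.range N, |w n|) / N := by
      rw [div_le_iff₀ hNpos]
      have h4 : (∑ n ∈ Finset.range N, |w n|) / N * N = ∑ n ∈ Finset.range N, |w n| := by
        field_simp
      nlinarith [h1]
    have hC' : C ≤ max C 0 := le_max_left _ _
    have hb' : (∑ n ∈ Finset.range N, |w n|) / N ≤ max b 0 := hbN.trans (le_max_left _ _)
    linarith
  have hsinf : sInf {a : ℝ | ∀ᶠ N : ℕ in atTop,
      (∑ n ∈ Finset.range N, |v n - w n|) / N ≤ a} < ε := by
    rw [← besic_sInf]; exact hlt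
  obtain ⟨a, ha, haε⟩ := exists_lt_of_csInf_lt hne hsinf
  filter_upwards [ha, eventually_ge_atTop 1] with N hN hN1
  have hNpos : (0:ℝ) < N := by exact_mod_cast hN1
  rw [div_le_iff₀ hNpos] at hN
  nlinarith

end AuxAC

namespace AuxAC

open Filter MeasureTheory

lemma key_estimate {R : Set ℕ} (hR : {n | n ∈ R}.Infinite) {w : ℕ → ℝ}
    (hw0 : ∀ n, 0 ≤ w n) (hpos : 0 < besic w) (hint : IntegrableWeight R w)
    {β : ℝ} {μw μR : Measure UnitAddCircle}
    (hμw : IsWeightLimit R w β μw) (hμR : IsLimitMeasure R β μR) :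
    ∀ ε : ℝ, 0 < ε → ∃ K : ℝ, 0 ≤ K ∧ ∀ f : C(UnitAddCircle, ℝ),
      (∀ x, 0 ≤ f x) → (∀ x, f x ≤ 1) →
      ∫ x, f x ∂μw ≤ K * ∫ x, f x ∂μR + ε := by
  intro ε hε
  set δ := besic w with hδ
  have hδpos : 0 < δ := hpos
  set ε' : ℝ := ε * δ / 2 with hε'def
  have hε' : 0 < ε' := by positivity
  obtain ⟨v, hv, ⟨C, hC⟩, hvw⟩ := hint ε' hε'
  obtain ⟨hv0, hvns, -⟩ := hv
  have hC0 : (0:ℝ) ≤ C := le_trans (hv0 0) (hC 0)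
  refine ⟨2 * C / δ, by positivity, ?_⟩
  intro f hf0 hf1
  set b : ℕ → ℝ := fun N => (N : ℝ)⁻¹ *
    ∑ n ∈ Finset.range N, f (((Nat.nth (· ∈ R) n : ℝ) * β : ℝ) : UnitAddCircle) with hbdef
  have hb : Tendsto b atTop (𝓝 (∫ x, f x ∂μR)) := avg_tendsto hR β μR hμR f
  have ha : Tendsto (fun N => wAvg R w β N (fun x => f x)) atTop (𝓝 (∫ x, f x ∂μw)) := hμw f
  have hfreq := besic_frequently hw0 hpos
  have hev := besic_eventually_le hw0 hpos hv0 hC hε' hvw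
  have hP : ∃ᶠ N : ℕ in atTop,
      (δ / 2 * N ≤ ∑ n ∈ Finset.range N, w n ∧
        (∑ n ∈ Finset.range N, |v n - w n| ≤ ε' * N ∧ 1 ≤ N)) :=
    hfreq.and_eventually (hev.and (eventually_ge_atTop 1))
  obtain ⟨φ, hφmono, hφ⟩ := Filter.extraction_of_frequently_atTop hP
  have hineq : ∀ N : ℕ, δ / 2 * N ≤ ∑ n ∈ Finset.range N, w n →
      ∑ n ∈ Finset.range N, |v n - w n| ≤ ε' * N → 1 ≤ N →
      wAvg R w β N (fun x => f x) ≤ 2 * C / δ * b N + ε := by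
    intro N hD hE hN1
    have hNpos : (0:ℝ) < N := by exact_mod_cast hN1
    set D : ℝ := ∑ n ∈ Finset.range N, w n with hDdef
    have hδN : (0:ℝ) < δ / 2 * N := by positivity
    have hD0 : (0:ℝ) < D := lt_of_lt_of_le hδN hD
    set F : ℕ → ℝ := fun n => f (((Nat.nth (· ∈ R) n : ℝ) * β : ℝ) : UnitAddCircle) with hFdef
    have hSF : ∑ n ∈ Finset.range N, F n = N * b N := by
      rw [hbdef]
      field_simp
    have hSF0 : (0:ℝ) ≤ ∑ n ∈ Finset.range N, F n :=
      Finset.sum_nonneg fun n _ => hf0 _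
    have hb0 : (0:ℝ) ≤ b N := by
      rw [hbdef]
      positivity
    have step1 : ∑ n ∈ Finset.range N, w n * F n
        ≤ C * ∑ n ∈ Finset.range N, F n + ε' * N := by
      have hterm : ∀ n ∈ Finset.range N, w n * F n ≤ C * F n + |v n - w n| := by
        intro n _
        have habs : w n - v n ≤ |v n - w n| := by
          rw [abs_sub_comm]; exact le_abs_self _
        have h1 : 0 ≤ F n := hf0 _
        have h2 : F n ≤ 1 := hf1 _
        have h3 : v n * F n ≤ C * F n := mul_le_mul_of_nonneg_right (hC n) h1
        nlinarith [abs_nonneg (v n - w n)]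
      calc ∑ n ∈ Finset.range N, w n * F n
          ≤ ∑ n ∈ Finset.range N, (C * F n + |v n - w n|) := Finset.sum_le_sum hterm
        _ = C * ∑ n ∈ Finset.range N, F n + ∑ n ∈ Finset.range N, |v n - w n| := by
            rw [Finset.sum_add_distrib, Finset.mul_sum]
        _ ≤ C * ∑ n ∈ Finset.range N, F n + ε' * N := by linarith
    have hwavg : wAvg R w β N (fun x => f x) = D⁻¹ * ∑ n ∈ Finset.range N, w n * F n := rfl
    have hnum0 : (0:ℝ) ≤ C * ∑ n ∈ Finset.range N, F n + ε' * N := by positivity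
    have step2 : wAvg R w β N (fun x => f x)
        ≤ (δ / 2 * N)⁻¹ * (C * ∑ n ∈ Finset.range N, F n + ε' * N) := by
      rw [hwavg]
      calc D⁻¹ * ∑ n ∈ Finset.range N, w n * F n
          ≤ D⁻¹ * (C * ∑ n ∈ Finset.range N, F n + ε' * N) :=
            mul_le_mul_of_nonneg_left step1 (by positivity)
        _ ≤ (δ / 2 * N)⁻¹ * (C * ∑ n ∈ Finset.range N, F n + ε' * N) := by
            apply mul_le_mul_of_nonneg_right _ hnum0
            exact inv_anti₀ hδN hD
    have heq : (δ / 2 * N)⁻¹ * (C * ∑ n ∈ Finset.range N, F n + ε' * N)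
        = 2 * C / δ * b N + ε := by
      rw [hSF, hε'def]
      have hδ0 : δ ≠ 0 := ne_of_gt hδpos
      have hN0 : (N:ℝ) ≠ 0 := ne_of_gt hNpos
      field_simp
    linarith [step2, heq.le]
  have hA : Tendsto (fun k => wAvg R w β (φ k) (fun x => f x)) atTop (𝓝 (∫ x, f x ∂μw)) :=
    ha.comp hφmono.tendsto_atTop
  have hB : Tendsto (fun k => 2 * C / δ * b (φ k) + ε) atTop
      (𝓝 (2 * C / δ * ∫ x, f x ∂μR + ε)) :=
    (((hb.comp hφmono.tendsto_atTop).const_mul (2 * C / δ)).add_const ε)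
  refine le_of_tendsto_of_tendsto' hA hB fun k => ?_
  obtain ⟨h1, h2, h3⟩ := hφ k
  exact hineq (φ k) h1 h2 h3

end AuxAC

namespace AuxAC

open Filter MeasureTheory

lemma integrable_of_cm {μ : Measure UnitAddCircle} [IsFiniteMeasure μ]
    (f : C(UnitAddCircle, ℝ)) (hf0 : ∀ x, 0 ≤ f x) (hf1 : ∀ x, f x ≤ 1) :
    Integrable (fun x => f x) μ := by
  refine (integrable_const (1:ℝ)).mono' f.continuous.aestronglyMeasurable ?_
  refine Filter.Eventually.of_forall fun x => ?_
  rw [Real.norm_eq_abs, abs_of_nonneg (hf0 x)]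
  exact hf1 x

end AuxAC



/-- a good integrable weight on `R` of positive `‖·‖₁`-seminorm has all its limit
measures absolutely continuous with respect to those of `R`. -/
theorem integrable_weight_absolutelyContinuous (R : Set ℕ) (hR : IsGoodSet R)
    (w : ℕ → ℝ) (hw : IsGoodWeight R w) (hint : IntegrableWeight R w)
    (hpos : 0 < besic w) :
    ∀ β : ℝ, ∀ μw μR : MeasureTheory.Measure UnitAddCircle,
      IsWeightLimit R w β μw → IsLimitMeasure R β μR → μw ≪ μR := by
  intro β μw μR hμw hμR
  obtain ⟨hRinf', -⟩ := hR
  have hRinf : {n | n ∈ R}.Infinite := by simpa using hRinf'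
  obtain ⟨hw0, hwns, -⟩ := hw
  have hfinR : IsFiniteMeasure μR := AuxAC.isFiniteMeasure_of_isLimitMeasure hRinf hμR
  have hfinw : IsFiniteMeasure μw := AuxAC.isFiniteMeasure_of_isWeightLimit hw0 hwns hμw
  have key := AuxAC.key_estimate hRinf hw0 hpos hint hμw hμR
  have hclosed : ∀ F : Set UnitAddCircle, IsClosed F → μR F = 0 → μw F = 0 := by
    intro F hF hF0
    have htr : ∀ ε : ℝ, 0 < ε → (μw F).toReal ≤ 2 * ε := by
      intro ε hε
      obtain ⟨K, hK0, hKf⟩ := key ε hε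
      have hrpos : (0:ℝ) < ε / (K + 1) := by positivity
      have hr : μR F < ENNReal.ofReal (ε / (K + 1)) := by
        rw [hF0]; exact ENNReal.ofReal_pos.2 hrpos
      obtain ⟨U, hFU, hUopen, hU⟩ := Set.exists_isOpen_lt_of_lt F _ hr
      have hdisj : Disjoint Uᶜ F := by
        rw [Set.disjoint_compl_left_iff_subset]
        exact hFU
      obtain ⟨f, hf0U, hf1F, hfIcc⟩ :=
        exists_continuous_zero_one_of_isClosed hUopen.isClosed_compl hF hdisj
      have hf0 : ∀ x, 0 ≤ f x := fun x => (hfIcc x).1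
      have hf1 : ∀ x, f x ≤ 1 := fun x => (hfIcc x).2
      have hintw : Integrable (fun x => f x) μw := AuxAC.integrable_of_cm f hf0 hf1
      have hintR : Integrable (fun x => f x) μR := AuxAC.integrable_of_cm f hf0 hf1
      have hlow : (μw F).toReal ≤ ∫ x, f x ∂μw := by
        have hle : ∀ x, F.indicator (fun _ => (1:ℝ)) x ≤ f x := by
          intro x
          by_cases hx : x ∈ F
          · rw [Set.indicator_of_mem hx]
            exact le_of_eq (hf1F hx).symm
          · rw [Set.indicator_of_notMem hx]
            exact hf0 x
        have h1 : ∫ x, F.indicator (fun _ => (1:ℝ)) x ∂μw = (μw F).toReal := by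
          rw [integral_indicator_const (1:ℝ) hF.measurableSet]; simp; rfl
        rw [← h1]
        exact integral_mono ((integrable_const (1:ℝ)).indicator hF.measurableSet) hintw hle
      have hup : ∫ x, f x ∂μR ≤ (μR U).toReal := by
        have hle : ∀ x, f x ≤ U.indicator (fun _ => (1:ℝ)) x := by
          intro x
          by_cases hx : x ∈ U
          · rw [Set.indicator_of_mem hx]
            exact hf1 x
          · rw [Set.indicator_of_notMem hx]
            exact le_of_eq (hf0U (by simpa using hx))
        have h1 : ∫ x, U.indicator (fun _ => (1:ℝ)) x ∂μR = (μR U).toReal := by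
          rw [integral_indicator_const (1:ℝ) hUopen.measurableSet]; simp; rfl
        rw [← h1]
        exact integral_mono hintR ((integrable_const (1:ℝ)).indicator hUopen.measurableSet) hle
      have hUreal : (μR U).toReal ≤ ε / (K + 1) :=
        ENNReal.toReal_le_of_le_ofReal hrpos.le hU.le
      have hKineq : K * (ε / (K + 1)) ≤ ε := by
        rw [mul_div_assoc'] at *
        rw [div_le_iff₀ (by positivity)]
        nlinarith
      have hmain := hKf f hf0 hf1
      have hR0 : (0:ℝ) ≤ ∫ x, f x ∂μR := integral_nonneg fun x => hf0 x
      calc (μw F).toReal ≤ ∫ x, f x ∂μw := hlow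
        _ ≤ K * ∫ x, f x ∂μR + ε := hmain
        _ ≤ K * (μR U).toReal + ε := by nlinarith
        _ ≤ K * (ε / (K + 1)) + ε := by nlinarith
        _ ≤ 2 * ε := by linarith
    have h0 : (μw F).toReal ≤ 0 := by
      refine le_of_forall_pos_le_add fun ε hε => ?_
      have := htr (ε / 4) (by linarith)
      linarith
    have heq : (μw F).toReal = 0 := le_antisymm h0 ENNReal.toReal_nonneg
    have := (ENNReal.toReal_eq_zero_iff _).1 heq
    exact this.resolve_right (measure_ne_top μw F)
  apply MeasureTheory.Measure.AbsolutelyContinuous.mk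
  intro t ht ht0
  have hle : μw t ≤ 0 := by
    refine ENNReal.le_of_forall_pos_le_add fun η hη _ => ?_
    obtain ⟨F, hFt, hFclosed, hlt⟩ :=
      ht.exists_isClosed_lt_add (μ := μw) (measure_ne_top μw t)
        (ε := (η : ENNReal)) (by exact_mod_cast hη.ne')
    have hμRF : μR F = 0 := le_antisymm (le_trans (measure_mono hFt) ht0.le) zero_le
    rw [hclosed F hFclosed hμRF, zero_add] at hlt
    simpa using hlt.le
  exact le_antisymm (by simpa using hle) zero_le
end

section
/- Let (S_k) be a sequence of subsets of ℕ that is Cauchy with respect to the seminorm ‖·‖₁, i.e. lim_{k→∞} sup_{l ≥ k} ‖𝟙_{S_l} − 𝟙_{S_k}‖₁ = 0. Then there exists a set S ⊆ ℕ with lim_{k→∞} ‖𝟙_{S_k} − 𝟙_S‖₁ = 0. -/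
open MeasureTheory Filter Topology
open scoped BigOperators

section CauchyAux

private lemma avg_le_two {f : ℕ → ℝ} (hf : ∀ n, |f n| ≤ 2) (N : ℕ) :
    (∑ n ∈ Finset.range N, |f n|) / N ≤ 2 := by
  rcases Nat.eq_zero_or_pos N with h | h
  · simp [h]
  · rw [div_le_iff₀ (by exact_mod_cast h : (0:ℝ) < N)]
    calc ∑ n ∈ Finset.range N, |f n| ≤ ∑ _n ∈ Finset.range N, (2:ℝ) :=
          Finset.sum_le_sum fun n _ => hf n
      _ = 2 * N := by simp [mul_comm]

private lemma avg_nonneg (f : ℕ → ℝ) (N : ℕ) :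
    0 ≤ (∑ n ∈ Finset.range N, |f n|) / N := by positivity

private lemma avg_bdd {f : ℕ → ℝ} (hf : ∀ n, |f n| ≤ 2) :
    IsBoundedUnder (· ≤ ·) atTop (fun N : ℕ => (∑ n ∈ Finset.range N, |f n|) / N) :=
  isBoundedUnder_of ⟨2, avg_le_two hf⟩

private lemma avg_cobdd (f : ℕ → ℝ) :
    IsCoboundedUnder (· ≤ ·) atTop (fun N : ℕ => (∑ n ∈ Finset.range N, |f n|) / N) :=
  isCoboundedUnder_le_of_eventually_le atTop (x := 0) (.of_forall (avg_nonneg f))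

private lemma besic_nonneg' {f : ℕ → ℝ} (hf : ∀ n, |f n| ≤ 2) : 0 ≤ besic f :=
  le_limsup_of_frequently_le (Eventually.frequently (.of_forall (avg_nonneg f))) (avg_bdd hf)

private lemma besic_tri {a b c : ℕ → ℝ} (hab : ∀ n, |a n - b n| ≤ 2) (hbc : ∀ n, |b n - c n| ≤ 2) :
    besic (fun n => a n - c n) ≤
      besic (fun n => a n - b n) + besic (fun n => b n - c n) := by
  have key : ∀ N : ℕ, (∑ n ∈ Finset.range N, |a n - c n|) / N ≤
      (∑ n ∈ Finset.range N, |a n - b n|) / N + (∑ n ∈ Finset.range N, |b n - c n|) / N := by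
    intro N
    rw [← add_div]
    have hs : (∑ n ∈ Finset.range N, |a n - c n|) ≤
        (∑ n ∈ Finset.range N, |a n - b n|) + ∑ n ∈ Finset.range N, |b n - c n| := by
      rw [← Finset.sum_add_distrib]
      exact Finset.sum_le_sum fun n _ => abs_sub_le _ _ _
    exact div_le_div_of_nonneg_right hs (Nat.cast_nonneg N)
  calc besic (fun n => a n - c n)
      ≤ limsup ((fun N : ℕ => (∑ n ∈ Finset.range N, |a n - b n|) / N)
          + fun N : ℕ => (∑ n ∈ Finset.range N, |b n - c n|) / N) atTop :=
        limsup_le_limsup (.of_forall key) (avg_cobdd _)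
          (isBoundedUnder_of ⟨4, fun N => by
            simp only [Pi.add_apply]
            linarith [avg_le_two hab N, avg_le_two hbc N]⟩)
    _ ≤ _ :=
        limsup_add_le (isBoundedUnder_of ⟨0, fun N => avg_nonneg (fun n => a n - b n) N⟩)
          (avg_bdd hab) (avg_cobdd _) (avg_bdd hbc)

private lemma besic_le' {f : ℕ → ℝ} {c : ℝ}
    (h : ∀ δ : ℝ, 0 < δ → ∀ᶠ N : ℕ in atTop, (∑ n ∈ Finset.range N, |f n|) / N ≤ c + δ) :
    besic f ≤ c :=
  le_of_forall_pos_le_add fun δ hδ => limsup_le_of_le (avg_cobdd f) (h δ hδ)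

private lemma sum_range_double {NN : ℕ → ℕ} (h : ∀ t, 2 * NN t + 1 ≤ NN (t+1)) (m : ℕ) :
    ∑ t ∈ Finset.range (m+1), (NN t : ℝ) ≤ 2 * NN m := by
  induction m with
  | zero =>
      rw [Finset.sum_range_one]
      have : (0:ℝ) ≤ NN 0 := Nat.cast_nonneg _
      linarith
  | succ m ih =>
      rw [Finset.sum_range_succ]
      have h2 : (2:ℝ) * NN m + 1 ≤ NN (m+1) := by exact_mod_cast h m
      linarith

private lemma sum_double_le {NN : ℕ → ℕ} (h : ∀ t, 2 * NN t + 1 ≤ NN (t+1)) {Mtot : ℕ}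
    (F : Finset ℕ) (hF : ∀ i ∈ F, NN (i+1) ≤ Mtot) :
    ∑ i ∈ F, (NN (i+1) : ℝ) ≤ 2 * Mtot := by
  rcases F.eq_empty_or_nonempty with rfl | hne
  · simp
  · calc ∑ i ∈ F, (NN (i+1) : ℝ)
        = ∑ t ∈ F.image (· + 1), (NN t : ℝ) :=
          (Finset.sum_image (g := (· + 1)) (f := fun t => (NN t : ℝ))
            (by intro x _ y _ hxy; simpa using hxy)).symm
      _ ≤ ∑ t ∈ Finset.range (F.max' hne + 2), (NN t : ℝ) := by
          apply Finset.sum_le_sum_of_subset_of_nonneg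
          · intro t ht
            simp only [Finset.mem_image, Finset.mem_range] at ht ⊢
            obtain ⟨i, hi, rfl⟩ := ht
            have := Finset.le_max' F i hi
            omega
          · intro t _ _; exact Nat.cast_nonneg _
      _ ≤ 2 * NN (F.max' hne + 1) := sum_range_double h (F.max' hne + 1)
      _ ≤ 2 * Mtot := by
          have := hF _ (F.max'_mem hne)
          have : (NN (F.max' hne + 1) : ℝ) ≤ Mtot := by exact_mod_cast this
          linarith

end CauchyAux

/-- a Cauchy sequence of subsets of `ℕ` in the Besicovitch seminorm `‖·‖₁`
converges to some set `S ⊆ ℕ` in `‖·‖₁`. -/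
theorem cauchy_sets_converge (S : ℕ → Set ℕ)
    (hcauchy : ∀ ε > (0 : ℝ), ∃ K, ∀ k ≥ K, ∀ l ≥ k,
      besic (fun n => (S l).indicator (fun _ => (1 : ℝ)) n
        - (S k).indicator (fun _ => (1 : ℝ)) n) < ε) :
    ∃ T : Set ℕ,
      Tendsto (fun k => besic (fun n => (S k).indicator (fun _ => (1 : ℝ)) n
        - T.indicator (fun _ => (1 : ℝ)) n)) atTop (𝓝 0) := by
  classical
  -- absolute bounds on indicator differences
  have habs : ∀ (A B : Set ℕ) (n : ℕ),
      |A.indicator (fun _ => (1:ℝ)) n - B.indicator (fun _ => (1:ℝ)) n| ≤ 2 := by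
    intro A B n
    by_cases hA : n ∈ A <;> by_cases hB : n ∈ B <;>
      simp [Set.indicator_apply, hA, hB] <;> norm_num
  have habs1 : ∀ (A B : Set ℕ) (n : ℕ),
      |A.indicator (fun _ => (1:ℝ)) n - B.indicator (fun _ => (1:ℝ)) n| ≤ 1 := by
    intro A B n
    by_cases hA : n ∈ A <;> by_cases hB : n ∈ B <;>
      simp [Set.indicator_apply, hA, hB] <;> norm_num
  -- step 1: extract K and monotone k with k j ≥ K j
  choose K hK using fun j : ℕ => hcauchy ((1/2:ℝ)^j) (by positivity)
  obtain ⟨k, hk0, hkrec⟩ : ∃ k : ℕ → ℕ, k 0 = K 0 ∧ ∀ j, k (j+1) = max (K (j+1)) (k j) :=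
    ⟨fun j => Nat.rec (K 0) (fun j' prev => max (K (j'+1)) prev) j, rfl, fun _ => rfl⟩
  have hkK : ∀ j, K j ≤ k j := by
    intro j
    cases j with
    | zero => rw [hk0]
    | succ j => rw [hkrec]; exact le_max_left _ _
  have hkmono : Monotone k := monotone_nat_of_le_succ fun j => by
    rw [hkrec]; exact le_max_right _ _
  have hd : ∀ j i, j ≤ i → besic (fun n => (S (k i)).indicator (fun _ => (1:ℝ)) n
      - (S (k j)).indicator (fun _ => (1:ℝ)) n) < (1/2:ℝ)^j :=
    fun j i hji => hK j (k j) (hkK j) (k i) (hkmono hji)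
  -- step 2: thresholds M
  have hMex : ∀ i j : ℕ, ∃ M0 : ℕ, ∀ N ≥ M0, j ≤ i →
      (∑ n ∈ Finset.range N, |(S (k i)).indicator (fun _ => (1:ℝ)) n
        - (S (k j)).indicator (fun _ => (1:ℝ)) n|) / N < (1/2:ℝ)^j := by
    intro i j
    by_cases hji : j ≤ i
    · have h := hd j i hji
      unfold besic at h
      obtain ⟨M0, hM0⟩ := eventually_atTop.mp
        (eventually_lt_of_limsup_lt h (avg_bdd (habs _ _)))
      exact ⟨M0, fun N hN _ => hM0 N hN⟩
    · exact ⟨0, fun N _ h => absurd h hji⟩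
  choose M hM using hMex
  -- step 3: thresholds NN
  obtain ⟨NN, hNN0, hNNrec⟩ : ∃ NN : ℕ → ℕ, NN 0 = 0 ∧
      ∀ i, NN (i+1) = max (2 * NN i + 1) ((Finset.range (i+2)).sup (M (i+1))) :=
    ⟨fun i => Nat.rec 0 (fun i' prev =>
      max (2 * prev + 1) ((Finset.range (i'+1+1)).sup (M (i'+1)))) i, rfl, fun _ => rfl⟩
  have hNd : ∀ i, 2 * NN i + 1 ≤ NN (i+1) := fun i => by
    rw [hNNrec]; exact le_max_left _ _
  have hNM : ∀ i j, j ≤ i + 1 → M (i+1) j ≤ NN (i+1) := fun i j h => by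
    rw [hNNrec]
    exact le_trans (Finset.le_sup (Finset.mem_range.mpr (by omega))) (le_max_right _ _)
  have hNmono : StrictMono NN := strictMono_nat_of_lt_succ fun i => by
    have := hNd i; omega
  have hNge : ∀ i, i ≤ NN i := by
    intro i
    induction i with
    | zero => omega
    | succ i ih => have := hNd i; omega
  -- step 4: idx and T
  set idx : ℕ → ℕ := fun n => Nat.findGreatest (fun p => NN p ≤ n) n with hidxdef
  have hidx_le : ∀ n, idx n ≤ n := fun n => Nat.findGreatest_le n
  have hidx1 : ∀ n, NN (idx n) ≤ n := fun n =>
    Nat.findGreatest_spec (P := fun p => NN p ≤ n) (Nat.zero_le n)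
      (show NN 0 ≤ n by rw [hNN0]; omega)
  have hidx2 : ∀ n i, idx n < i → n < NN i := by
    intro n i h
    by_contra hc
    push_neg at hc
    rcases le_or_gt i n with hin | hin
    · exact absurd (show i ≤ idx n from
        Nat.le_findGreatest (P := fun p => NN p ≤ n) hin hc) (by omega)
    · have := hNge i; omega
  have hidx_eq : ∀ n i, NN i ≤ n → n < NN (i+1) → idx n = i := by
    intro n i h1 h2
    have hle : i ≤ idx n :=
      Nat.le_findGreatest (P := fun p => NN p ≤ n) (le_trans (hNge i) h1) h1
    have hgt : ¬ (i + 1 ≤ idx n) := by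
      intro hgt
      have := hNmono.monotone hgt
      have := hidx1 n
      omega
    omega
  set T : Set ℕ := {n : ℕ | n ∈ S (k (idx n))} with hTdef
  have hT : ∀ n, T.indicator (fun _ => (1:ℝ)) n
      = (S (k (idx n))).indicator (fun _ => (1:ℝ)) n := by
    intro n
    by_cases h : n ∈ S (k (idx n))
    · rw [Set.indicator_of_mem (show n ∈ T from h) , Set.indicator_of_mem h]
    · rw [Set.indicator_of_notMem (show n ∉ T from h), Set.indicator_of_notMem h]
  -- core estimate
  have hcore : ∀ (j Mtot : ℕ),
      (∑ n ∈ Finset.range Mtot, |(S (k j)).indicator (fun _ => (1:ℝ)) n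
        - T.indicator (fun _ => (1:ℝ)) n|)
      ≤ (NN j : ℝ) + 3 * (1/2:ℝ)^j * Mtot := by
    intro j Mtot
    have hgsum : (∑ n ∈ Finset.range Mtot, |(S (k j)).indicator (fun _ => (1:ℝ)) n
          - T.indicator (fun _ => (1:ℝ)) n|)
        = ∑ n ∈ Finset.range Mtot, |(S (k j)).indicator (fun _ => (1:ℝ)) n
          - (S (k (idx n))).indicator (fun _ => (1:ℝ)) n| :=
      Finset.sum_congr rfl fun n _ => by rw [hT n]
    rw [hgsum]
    have hfib : ∑ n ∈ Finset.range Mtot, |(S (k j)).indicator (fun _ => (1:ℝ)) n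
          - (S (k (idx n))).indicator (fun _ => (1:ℝ)) n|
        = ∑ i ∈ Finset.range Mtot, ∑ n ∈ (Finset.range Mtot).filter (fun n => idx n = i),
            |(S (k j)).indicator (fun _ => (1:ℝ)) n
              - (S (k (idx n))).indicator (fun _ => (1:ℝ)) n| :=
      (Finset.sum_fiberwise_of_maps_to (fun n hn => Finset.mem_range.mpr
        (lt_of_le_of_lt (hidx_le n) (Finset.mem_range.mp hn))) _).symm
    rw [hfib]
    have hfilter : ∀ i, (Finset.range Mtot).filter (fun n => idx n = i)
        = Finset.Ico (NN i) (min (NN (i+1)) Mtot) := by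
      intro i
      ext n
      simp only [Finset.mem_filter, Finset.mem_range, Finset.mem_Ico, lt_min_iff]
      constructor
      · rintro ⟨hn, rfl⟩
        exact ⟨hidx1 n, hidx2 n _ (Nat.lt_succ_self _), hn⟩
      · rintro ⟨h1, h2, h3⟩
        exact ⟨h3, hidx_eq n i h1 h2⟩
    have hbound : ∀ i ∈ Finset.range Mtot,
        (∑ n ∈ (Finset.range Mtot).filter (fun n => idx n = i),
          |(S (k j)).indicator (fun _ => (1:ℝ)) n
            - (S (k (idx n))).indicator (fun _ => (1:ℝ)) n|)
        ≤ (if i < j then ((NN (i+1) : ℝ) - NN i) else 0)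
          + (if NN i < Mtot ∧ j < i
              then (1/2:ℝ)^j * ((min (NN (i+1)) Mtot : ℕ) : ℝ) else 0) := by
      intro i _
      rw [hfilter i]
      by_cases hij : i < j
      · rw [if_pos hij, if_neg (by omega), add_zero]
        have hcard : (Finset.Ico (NN i) (min (NN (i+1)) Mtot)).card ≤ NN (i+1) - NN i := by
          rw [Nat.card_Ico]; omega
        calc ∑ n ∈ Finset.Ico (NN i) (min (NN (i+1)) Mtot),
              |(S (k j)).indicator (fun _ => (1:ℝ)) n
                - (S (k (idx n))).indicator (fun _ => (1:ℝ)) n|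
            ≤ ∑ _n ∈ Finset.Ico (NN i) (min (NN (i+1)) Mtot), (1:ℝ) :=
              Finset.sum_le_sum fun n _ => habs1 _ _ n
          _ = ((Finset.Ico (NN i) (min (NN (i+1)) Mtot)).card : ℝ) := by simp
          _ ≤ ((NN (i+1) - NN i : ℕ) : ℝ) := by exact_mod_cast hcard
          _ = (NN (i+1) : ℝ) - NN i := by
              rw [Nat.cast_sub (hNmono (Nat.lt_succ_self i)).le]
      · rw [if_neg hij, zero_add]
        by_cases hcase : NN i < Mtot ∧ j < i
        · rw [if_pos hcase]
          obtain ⟨hiM, hji⟩ := hcase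
          have hm0gt : NN i < min (NN (i+1)) Mtot := lt_min (hNmono (Nat.lt_succ_self i)) hiM
          obtain ⟨i', rfl⟩ : ∃ i', i = i' + 1 := ⟨i - 1, by omega⟩
          have hMle : M (i'+1) j ≤ NN (i'+1) := hNM i' j (by omega)
          have havg := hM (i'+1) j (min (NN (i'+1+1)) Mtot) (by omega) (by omega)
          have hgeq : ∀ n ∈ Finset.Ico (NN (i'+1)) (min (NN (i'+1+1)) Mtot),
              |(S (k j)).indicator (fun _ => (1:ℝ)) n
                - (S (k (idx n))).indicator (fun _ => (1:ℝ)) n|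
              = |(S (k (i'+1))).indicator (fun _ => (1:ℝ)) n
                - (S (k j)).indicator (fun _ => (1:ℝ)) n| := by
            intro n hn
            rw [Finset.mem_Ico] at hn
            have hidxn : idx n = i' + 1 :=
              hidx_eq n _ hn.1 (lt_of_lt_of_le hn.2 (min_le_left _ _))
            rw [hidxn, abs_sub_comm]
          rw [Finset.sum_congr rfl hgeq]
          have hsub : Finset.Ico (NN (i'+1)) (min (NN (i'+1+1)) Mtot)
              ⊆ Finset.range (min (NN (i'+1+1)) Mtot) := by
            intro x hx
            rw [Finset.mem_Ico] at hx
            exact Finset.mem_range.mpr hx.2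
          calc ∑ n ∈ Finset.Ico (NN (i'+1)) (min (NN (i'+1+1)) Mtot),
                |(S (k (i'+1))).indicator (fun _ => (1:ℝ)) n
                  - (S (k j)).indicator (fun _ => (1:ℝ)) n|
              ≤ ∑ n ∈ Finset.range (min (NN (i'+1+1)) Mtot),
                |(S (k (i'+1))).indicator (fun _ => (1:ℝ)) n
                  - (S (k j)).indicator (fun _ => (1:ℝ)) n| :=
                Finset.sum_le_sum_of_subset_of_nonneg hsub fun n _ _ => abs_nonneg _
            _ ≤ (1/2:ℝ)^j * ((min (NN (i'+1+1)) Mtot : ℕ) : ℝ) := by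
                have hm0pos : (0:ℝ) < ((min (NN (i'+1+1)) Mtot : ℕ) : ℝ) := by
                  exact_mod_cast (by omega : 0 < min (NN (i'+1+1)) Mtot)
                rw [div_lt_iff₀ hm0pos] at havg
                linarith
        · rw [if_neg hcase]
          push_neg at hcase
          rcases Nat.lt_or_ge (NN i) Mtot with h1 | h1
          · have hij' : i = j := by
              have := hcase h1; omega
            apply le_of_eq
            apply Finset.sum_eq_zero
            intro n hn
            rw [Finset.mem_Ico] at hn
            have hidxn : idx n = i :=
              hidx_eq n i hn.1 (lt_of_lt_of_le hn.2 (min_le_left _ _))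
            rw [hidxn, hij']
            simp
          · have hempty : Finset.Ico (NN i) (min (NN (i+1)) Mtot) = ∅ := by
              apply Finset.Ico_eq_empty
              have := min_le_right (NN (i+1)) Mtot
              omega
            rw [hempty]
            simp
    calc ∑ i ∈ Finset.range Mtot, ∑ n ∈ (Finset.range Mtot).filter (fun n => idx n = i),
            |(S (k j)).indicator (fun _ => (1:ℝ)) n
              - (S (k (idx n))).indicator (fun _ => (1:ℝ)) n|
        ≤ ∑ i ∈ Finset.range Mtot,
            ((if i < j then ((NN (i+1) : ℝ) - NN i) else 0)
              + (if NN i < Mtot ∧ j < i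
                  then (1/2:ℝ)^j * ((min (NN (i+1)) Mtot : ℕ) : ℝ) else 0)) :=
          Finset.sum_le_sum hbound
      _ = (∑ i ∈ Finset.range Mtot, (if i < j then ((NN (i+1) : ℝ) - NN i) else 0))
          + ∑ i ∈ Finset.range Mtot, (if NN i < Mtot ∧ j < i
              then (1/2:ℝ)^j * ((min (NN (i+1)) Mtot : ℕ) : ℝ) else 0) :=
          Finset.sum_add_distrib
      _ ≤ (NN j : ℝ) + 3 * (1/2:ℝ)^j * Mtot := by
          have hb1 : (∑ i ∈ Finset.range Mtot, (if i < j then ((NN (i+1) : ℝ) - NN i) else 0))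
              ≤ (NN j : ℝ) := by
            calc ∑ i ∈ Finset.range Mtot, (if i < j then ((NN (i+1):ℝ) - NN i) else 0)
                = ∑ i ∈ (Finset.range Mtot).filter (· < j), ((NN (i+1):ℝ) - NN i) :=
                  (Finset.sum_filter _ _).symm
              _ ≤ ∑ i ∈ Finset.range j, ((NN (i+1):ℝ) - NN i) := by
                  apply Finset.sum_le_sum_of_subset_of_nonneg
                  · intro i hi
                    simp only [Finset.mem_filter, Finset.mem_range] at hi ⊢
                    exact hi.2
                  · intro i _ _
                    have h' : (NN i : ℝ) ≤ NN (i+1) := by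
                      exact_mod_cast (hNmono (Nat.lt_succ_self i)).le
                    linarith
              _ = (NN j : ℝ) - NN 0 := Finset.sum_range_sub (fun i => (NN i : ℝ)) j
              _ = (NN j : ℝ) := by rw [hNN0]; simp
          have hb2 : (∑ i ∈ Finset.range Mtot, (if NN i < Mtot ∧ j < i
                then (1/2:ℝ)^j * ((min (NN (i+1)) Mtot : ℕ) : ℝ) else 0))
              ≤ (1/2:ℝ)^j * (3 * Mtot) := by
            rw [← Finset.sum_filter, ← Finset.mul_sum]
            have hmin : ∑ i ∈ (Finset.range Mtot).filter (fun i => NN i < Mtot ∧ j < i),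
                ((min (NN (i+1)) Mtot : ℕ) : ℝ) ≤ 3 * Mtot := by
              set A := (Finset.range Mtot).filter (fun i => NN i < Mtot ∧ j < i) with hA
              rw [← Finset.sum_filter_add_sum_filter_not A (fun i => NN (i+1) ≤ Mtot)]
              have h1 : ∑ i ∈ A.filter (fun i => NN (i+1) ≤ Mtot),
                  ((min (NN (i+1)) Mtot : ℕ):ℝ) ≤ 2 * Mtot := by
                have heq : ∀ i ∈ A.filter (fun i => NN (i+1) ≤ Mtot),
                    ((min (NN (i+1)) Mtot : ℕ):ℝ) = (NN (i+1) : ℝ) := by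
                  intro i hi
                  rw [Finset.mem_filter] at hi
                  rw [min_eq_left hi.2]
                rw [Finset.sum_congr rfl heq]
                exact sum_double_le hNd _ (fun i hi => (Finset.mem_filter.mp hi).2)
              have h2 : ∑ i ∈ A.filter (fun i => ¬ NN (i+1) ≤ Mtot),
                  ((min (NN (i+1)) Mtot : ℕ):ℝ) ≤ (Mtot : ℝ) := by
                have hcard : (A.filter (fun i => ¬ NN (i+1) ≤ Mtot)).card ≤ 1 := by
                  rw [Finset.card_le_one]
                  intro a ha b hb
                  rw [Finset.mem_filter] at ha hb
                  obtain ⟨haA, ha2⟩ := ha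
                  obtain ⟨hbA, hb2'⟩ := hb
                  rw [hA, Finset.mem_filter] at haA hbA
                  by_contra hne
                  rcases Nat.lt_or_ge a b with hab | hab
                  · have hle : NN (a+1) ≤ NN b := hNmono.monotone (by omega)
                    have := hbA.2.1
                    omega
                  · have hle : NN (b+1) ≤ NN a := hNmono.monotone (by omega)
                    have := haA.2.1
                    omega
                calc ∑ i ∈ A.filter (fun i => ¬ NN (i+1) ≤ Mtot),
                      ((min (NN (i+1)) Mtot : ℕ):ℝ)
                    = ∑ _i ∈ A.filter (fun i => ¬ NN (i+1) ≤ Mtot), (Mtot:ℝ) := by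
                      apply Finset.sum_congr rfl
                      intro i hi
                      rw [min_eq_right (le_of_not_ge (Finset.mem_filter.mp hi).2)]
                  _ = ((A.filter (fun i => ¬ NN (i+1) ≤ Mtot)).card : ℝ) * Mtot := by
                      rw [Finset.sum_const, nsmul_eq_mul]
                  _ ≤ 1 * (Mtot : ℝ) := by
                      have : ((A.filter (fun i => ¬ NN (i+1) ≤ Mtot)).card : ℝ) ≤ 1 := by
                        exact_mod_cast hcard
                      have hM0 : (0:ℝ) ≤ (Mtot:ℝ) := Nat.cast_nonneg _
                      nlinarith
                  _ = (Mtot : ℝ) := one_mul _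
              linarith
            exact mul_le_mul_of_nonneg_left hmin (by positivity)
          have hring : (1/2:ℝ)^j * (3 * Mtot) = 3 * (1/2:ℝ)^j * Mtot := by ring
          linarith
  -- the key claim
  have hclaim : ∀ j : ℕ, besic (fun n => (S (k j)).indicator (fun _ => (1:ℝ)) n
      - T.indicator (fun _ => (1:ℝ)) n) ≤ 3 * (1/2:ℝ)^j := by
    intro j
    apply besic_le'
    intro δ hδ
    have hev : ∀ᶠ N : ℕ in atTop, (NN j : ℝ) ≤ δ * N := by
      filter_upwards [eventually_ge_atTop ⌈(NN j : ℝ)/δ⌉₊] with N hN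
      have h1 : ((NN j : ℝ)/δ) ≤ N := le_trans (Nat.le_ceil _) (by exact_mod_cast hN)
      rw [div_le_iff₀ hδ] at h1
      linarith
    filter_upwards [eventually_ge_atTop 1, hev] with N h1 h2
    have hNpos : (0:ℝ) < N := by exact_mod_cast h1
    rw [div_le_iff₀ hNpos]
    calc ∑ n ∈ Finset.range N, |(S (k j)).indicator (fun _ => (1:ℝ)) n
          - T.indicator (fun _ => (1:ℝ)) n|
        ≤ (NN j : ℝ) + 3 * (1/2:ℝ)^j * N := hcore j N
      _ ≤ δ * N + 3 * (1/2:ℝ)^j * N := by linarith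
      _ = (3 * (1/2:ℝ)^j + δ) * N := by ring
  -- conclusion
  refine ⟨T, ?_⟩
  rw [Metric.tendsto_atTop]
  intro ε hε
  obtain ⟨j, hj⟩ := exists_pow_lt_of_lt_one (show (0:ℝ) < ε/4 by linarith)
    (by norm_num : (1/2:ℝ) < 1)
  refine ⟨k j, fun m hm => ?_⟩
  have h1 : besic (fun n => (S m).indicator (fun _ => (1:ℝ)) n
      - (S (k j)).indicator (fun _ => (1:ℝ)) n) < (1/2:ℝ)^j :=
    hK j (k j) (hkK j) m hm
  have h2 := hclaim j
  have htri := besic_tri (a := fun n => (S m).indicator (fun _ => (1:ℝ)) n)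
    (b := fun n => (S (k j)).indicator (fun _ => (1:ℝ)) n)
    (c := fun n => T.indicator (fun _ => (1:ℝ)) n)
    (fun n => habs _ _ n) (fun n => habs _ _ n)
  have hnn : 0 ≤ besic (fun n => (S m).indicator (fun _ => (1:ℝ)) n
      - T.indicator (fun _ => (1:ℝ)) n) := besic_nonneg' (fun n => habs _ _ n)
  rw [Real.dist_eq, sub_zero, abs_of_nonneg hnn]
  calc besic (fun n => (S m).indicator (fun _ => (1:ℝ)) n
        - T.indicator (fun _ => (1:ℝ)) n)
      ≤ besic (fun n => (S m).indicator (fun _ => (1:ℝ)) n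
          - (S (k j)).indicator (fun _ => (1:ℝ)) n)
        + besic (fun n => (S (k j)).indicator (fun _ => (1:ℝ)) n
          - T.indicator (fun _ => (1:ℝ)) n) := htri
    _ < (1/2:ℝ)^j + 3 * (1/2:ℝ)^j := by linarith
    _ = 4 * (1/2:ℝ)^j := by ring
    _ < ε := by linarith
end

section
/- Let R ⊆ ℕ be a good set with increasing enumeration (r_n), and let (S_k) be a sequence of good subsets of R each having a relative mean M_R(S_k), converging to S ⊆ R in the relative seminorm: lim_k limsup_N (1/N) #{n ≤ N : r_n ∈ S_k Δ S} = 0. Assume limsup_k M_R(S_k) > 0. Then: (1) lim_k M_R(S_k) exists, the relative mean M_R(S) exists, and M_R(S) = lim_k M_R(S_k) > 0; (2) S is a good set; (3) the limit measures converge in total variation uniformly in β: lim_k sup_{β∈ℝ} ‖μ_{S_k,β} − μ_{S,β}‖_var = 0. -/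
open MeasureTheory Filter Topology
open scoped BigOperators

open scoped symmDiff ENNReal NNReal

section Aux
open Classical
variable {R A B S T : Set ℕ}

lemma relCount_le (R S : Set ℕ) (N : ℕ) : relCount R S N ≤ N := by
  classical
  refine le_trans (Finset.card_filter_le _ _) (by simp)

lemma relCount_mono (h : A ⊆ B) (N : ℕ) : relCount R A N ≤ relCount R B N := by
  classical
  exact Finset.card_le_card (Finset.filter_subset_filter _ (by intro x hx; exact hx) |>.trans
    (by intro x hx; simp only [Finset.mem_filter] at *; exact ⟨hx.1, h hx.2⟩))

lemma relCount_union_le (R A B : Set ℕ) (N : ℕ) :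
    relCount R (A ∪ B) N ≤ relCount R A N + relCount R B N := by
  classical
  unfold relCount
  refine le_trans (Finset.card_le_card ?_) (Finset.card_union_le _ _)
  intro x hx
  simp only [Finset.mem_filter, Finset.mem_union, Set.mem_union] at *
  tauto

lemma abs_relCount_sub_le (R A B : Set ℕ) (N : ℕ) :
    |(relCount R A N : ℝ) - relCount R B N| ≤ relCount R (A ∆ B) N := by
  have h1 : ∀ X Y : Set ℕ, relCount R X N ≤ relCount R Y N + relCount R (X ∆ Y) N := by
    intro X Y
    refine le_trans (relCount_mono (show X ⊆ Y ∪ X ∆ Y by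
      intro x hx
      by_cases hy : x ∈ Y
      · exact Or.inl hy
      · exact Or.inr (Set.mem_symmDiff.2 (Or.inl ⟨hx, hy⟩))) N) (relCount_union_le _ _ _ _)
  rw [abs_sub_le_iff]
  constructor
  · have := h1 A B
    push_cast [← Nat.cast_le (α := ℝ)] at this ⊢
    linarith
  · have := h1 B A
    rw [symmDiff_comm]
    push_cast [← Nat.cast_le (α := ℝ)] at this ⊢
    linarith

lemma symmDiff_relCount_triangle (R A B C : Set ℕ) (N : ℕ) :
    relCount R (A ∆ B) N ≤ relCount R (A ∆ C) N + relCount R (C ∆ B) N := by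
  refine le_trans (relCount_mono ?_ N) (relCount_union_le _ _ _ _)
  intro x hx
  rw [Set.mem_union, Set.mem_symmDiff] at *
  rcases hx with ⟨ha, hb⟩ | ⟨hb, ha⟩ <;> by_cases hc : x ∈ C <;>
    simp [Set.mem_symmDiff, ha, hb, hc]

end Aux

section AuxB
open Classical
variable {R S : Set ℕ}

/-- number of elements of R in `[0, N]`. -/
noncomputable def cntR (R : Set ℕ) (N : ℕ) : ℕ := Nat.count (· ∈ R) (N + 1)

lemma hsetOf (R : Set ℕ) : setOf (· ∈ R) = R := rfl

lemma relCount_cntR (hR : R.Infinite) (hS : S ⊆ R) (N : ℕ) :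
    relCount R S (cntR R N) = ((Finset.range (N + 1)).filter (· ∈ S)).card := by
  classical
  have hinf : (setOf (· ∈ R)).Infinite := hR
  unfold relCount cntR
  refine Finset.card_bij' (fun n _ => Nat.nth (· ∈ R) n) (fun k _ => Nat.count (· ∈ R) k)
    ?_ ?_ ?_ ?_
  · intro n hn
    simp only [Finset.mem_filter, Finset.mem_range] at hn ⊢
    exact ⟨Nat.nth_lt_of_lt_count hn.1, hn.2⟩
  · intro k hk
    simp only [Finset.mem_filter, Finset.mem_range] at hk ⊢
    obtain ⟨hk1, hk2⟩ := hk
    constructor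
    · calc Nat.count (· ∈ R) k < Nat.count (· ∈ R) (k+1) := by
            rw [Nat.count_succ, if_pos (hS hk2)]; omega
        _ ≤ Nat.count (· ∈ R) (N+1) := Nat.count_monotone _ hk1
    · rw [Nat.nth_count (hS hk2)]; exact hk2
  · intro n hn
    exact Nat.count_nth_of_infinite hinf n
  · intro k hk
    simp only [Finset.mem_filter, Finset.mem_range] at hk
    exact Nat.nth_count (hS hk.2)

lemma initSeg_le_relCount (hR : R.Infinite) (hS : S ⊆ R) (N : ℕ) :
    (initSeg S N).card ≤ relCount R S (cntR R N) := by
  rw [relCount_cntR hR hS]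
  refine Finset.card_le_card ?_
  intro x hx
  simp only [initSeg, Finset.mem_filter, Finset.mem_Icc, Finset.mem_range] at *
  exact ⟨by omega, hx.2⟩

lemma relCount_le_initSeg (hR : R.Infinite) (hS : S ⊆ R) (N : ℕ) :
    relCount R S (cntR R N) ≤ (initSeg S N).card + 1 := by
  rw [relCount_cntR hR hS]
  have : ((Finset.range (N + 1)).filter (· ∈ S)) ⊆ insert 0 (initSeg S N) := by
    intro x hx
    simp only [initSeg, Finset.mem_filter, Finset.mem_Icc, Finset.mem_range,
      Finset.mem_insert] at *
    rcases Nat.eq_zero_or_pos x with h0 | h0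
    · exact Or.inl h0
    · exact Or.inr ⟨⟨h0, by omega⟩, hx.2⟩
  refine le_trans (Finset.card_le_card this) ?_
  exact le_trans (Finset.card_insert_le _ _) (by omega)

lemma tendsto_cntR (hR : R.Infinite) : Tendsto (cntR R) atTop atTop := by
  have hinf : (setOf (· ∈ R)).Infinite := hR
  refine tendsto_atTop_atTop_of_monotone ?_ ?_
  · intro a b hab
    exact Nat.count_monotone _ (by omega)
  · intro b
    refine ⟨Nat.nth (· ∈ R) b, ?_⟩
    unfold cntR
    rw [Nat.count_nth_succ_of_infinite hinf]
    omega

end AuxB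

section Aux2
variable {R S : Set ℕ} {x θ δ : ℝ}

lemma ratio_nonneg (R S : Set ℕ) (N : ℕ) : 0 ≤ (relCount R S N : ℝ) / N := by positivity

lemma ratio_le_one (R S : Set ℕ) (N : ℕ) : (relCount R S N : ℝ) / N ≤ 1 := by
  rcases Nat.eq_zero_or_pos N with h | h
  · simp [h]
  · rw [div_le_one (by exact_mod_cast h)]
    exact_mod_cast relCount_le R S N

lemma ratio_bddAbove (R S : Set ℕ) :
    IsBoundedUnder (· ≤ ·) atTop (fun N => (relCount R S N : ℝ) / N) :=
  isBoundedUnder_of ⟨1, fun N => ratio_le_one R S N⟩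

lemma ratio_bddBelow (R S : Set ℕ) :
    IsBoundedUnder (· ≥ ·) atTop (fun N => (relCount R S N : ℝ) / N) :=
  isBoundedUnder_of ⟨0, fun N => ratio_nonneg R S N⟩

lemma limsup_ratio_nonneg (R S : Set ℕ) :
    0 ≤ Filter.limsup (fun N => (relCount R S N : ℝ) / N) atTop :=
  le_limsup_of_frequently_le (Frequently.of_forall (ratio_nonneg R S)) (ratio_bddAbove R S)

lemma eventually_ratio_lt (h : Filter.limsup (fun N => (relCount R S N : ℝ) / N) atTop < δ) :
    ∀ᶠ N in atTop, (relCount R S N : ℝ) / N < δ :=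
  eventually_lt_of_limsup_lt h (ratio_bddAbove R S)

lemma tendsto_inv_cntR (hR : R.Infinite) :
    Tendsto (fun N => ((cntR R N : ℝ))⁻¹) atTop (𝓝 0) :=
  tendsto_inv_atTop_zero.comp ((tendsto_natCast_atTop_atTop).comp (tendsto_cntR hR))

lemma eventually_cntR_pos (hR : R.Infinite) : ∀ᶠ N in atTop, 0 < cntR R N :=
  (tendsto_cntR hR).eventually_ge_atTop 1

lemma tendsto_initSeg_ratio (hR : R.Infinite) (hS : S ⊆ R)
    (h : Tendsto (fun M => (relCount R S M : ℝ) / M) atTop (𝓝 x)) :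
    Tendsto (fun N => ((initSeg S N).card : ℝ) / (cntR R N : ℝ)) atTop (𝓝 x) := by
  have hu : Tendsto (fun N => (relCount R S (cntR R N) : ℝ) / (cntR R N : ℝ)) atTop (𝓝 x) :=
    h.comp (tendsto_cntR hR)
  have hlo : Tendsto (fun N => (relCount R S (cntR R N) : ℝ) / (cntR R N : ℝ)
      - ((cntR R N : ℝ))⁻¹) atTop (𝓝 x) := by
    simpa using hu.sub (tendsto_inv_cntR hR)
  refine tendsto_of_tendsto_of_tendsto_of_le_of_le' hlo hu ?_ ?_
  · filter_upwards [eventually_cntR_pos hR] with N hN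
    have hc : (0:ℝ) < (cntR R N : ℝ) := by exact_mod_cast hN
    have h2 : (relCount R S (cntR R N) : ℝ) ≤ ((initSeg S N).card : ℝ) + 1 := by
      exact_mod_cast relCount_le_initSeg hR hS N
    rw [sub_le_iff_le_add, div_add' _ _ _ (ne_of_gt hc), div_le_div_iff₀ hc hc]
    have : ((cntR R N : ℝ))⁻¹ * (cntR R N : ℝ) = 1 := inv_mul_cancel₀ (ne_of_gt hc)
    nlinarith [hc]
  · filter_upwards [eventually_cntR_pos hR] with N hN
    have hc : (0:ℝ) < (cntR R N : ℝ) := by exact_mod_cast hN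
    have h2 : ((initSeg S N).card : ℝ) ≤ (relCount R S (cntR R N) : ℝ) := by
      exact_mod_cast initSeg_le_relCount hR hS N
    gcongr

lemma eventually_initSeg_ratio_le (hR : R.Infinite) (hS : S ⊆ R)
    (h : ∀ᶠ M in atTop, (relCount R S M : ℝ) / M ≤ δ) :
    ∀ᶠ N in atTop, ((initSeg S N).card : ℝ) / (cntR R N : ℝ) ≤ δ := by
  filter_upwards [eventually_cntR_pos hR, (tendsto_cntR hR).eventually h] with N h1 h2
  have hc : (0:ℝ) < (cntR R N : ℝ) := by exact_mod_cast h1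
  have h3 : ((initSeg S N).card : ℝ) ≤ (relCount R S (cntR R N) : ℝ) := by
    exact_mod_cast initSeg_le_relCount hR hS N
  calc ((initSeg S N).card : ℝ) / (cntR R N : ℝ)
      ≤ (relCount R S (cntR R N) : ℝ) / (cntR R N : ℝ) := by gcongr
    _ ≤ δ := h2

lemma eventually_initSeg_ratio_ge (hR : R.Infinite) (hS : S ⊆ R) (hθ : θ < x)
    (h : Tendsto (fun M => (relCount R S M : ℝ) / M) atTop (𝓝 x)) :
    ∀ᶠ N in atTop, θ ≤ ((initSeg S N).card : ℝ) / (cntR R N : ℝ) :=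
  (tendsto_initSeg_ratio hR hS h).eventually_const_le hθ

end Aux2

section Aux3
open Classical
variable {R A B : Set ℕ}

lemma initSeg_symmDiff_subset (A B : Set ℕ) (N : ℕ) :
    (initSeg A N \ initSeg B N) ∪ (initSeg B N \ initSeg A N) ⊆ initSeg (A ∆ B) N := by
  intro x hx
  simp only [initSeg, Finset.mem_union, Finset.mem_sdiff, Finset.mem_filter] at hx ⊢
  rcases hx with ⟨⟨h1, h2⟩, h3⟩ | ⟨⟨h1, h2⟩, h3⟩ <;>
    refine ⟨h1, Set.mem_symmDiff.2 ?_⟩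
  · exact Or.inl ⟨h2, fun hB => h3 ⟨h1, hB⟩⟩
  · exact Or.inr ⟨h2, fun hA => h3 ⟨h1, hA⟩⟩

lemma card_sdiff_add_card_sdiff_le (A B : Set ℕ) (N : ℕ) :
    (initSeg A N \ initSeg B N).card + (initSeg B N \ initSeg A N).card
      ≤ (initSeg (A ∆ B) N).card := by
  rw [← Finset.card_union_of_disjoint disjoint_sdiff_sdiff]
  exact Finset.card_le_card (initSeg_symmDiff_subset A B N)

lemma emp_compare (A B : Set ℕ) (β : ℝ) (g : UnitAddCircle → ℝ) (G : ℝ)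
    (hg : ∀ x, |g x| ≤ G) (N : ℕ) (ha : 0 < (initSeg A N).card)
    (hb : 0 < (initSeg B N).card) :
    |empAvg A β N g - empAvg B β N g| ≤
      2 * G * ((initSeg (A ∆ B) N).card : ℝ) / ((initSeg A N).card : ℝ) := by
  classical
  set FA := initSeg A N with hFA
  set FB := initSeg B N with hFB
  set φ : ℕ → ℝ := fun s => g (((s : ℝ) * β : ℝ) : UnitAddCircle) with hφ
  set a : ℝ := (FA.card : ℝ) with haa
  set b : ℝ := (FB.card : ℝ) with hbb
  set d : ℝ := ((initSeg (A ∆ B) N).card : ℝ) with hdd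
  have hG : 0 ≤ G := le_trans (abs_nonneg _) (hg 0)
  have hapos : (0:ℝ) < a := by rw [haa]; exact_mod_cast ha
  have hbpos : (0:ℝ) < b := by rw [hbb]; exact_mod_cast hb
  have hcard : ((FA \ FB).card : ℝ) + ((FB \ FA).card : ℝ) ≤ d := by
    have h := card_sdiff_add_card_sdiff_le A B N
    rw [← hFA, ← hFB] at h
    rw [hdd]
    exact_mod_cast h
  have habs_ab : |a - b| ≤ d := by
    have h1 := Finset.card_inter_add_card_sdiff FA FB
    have h2 := Finset.card_inter_add_card_sdiff FB FA
    rw [Finset.inter_comm] at h2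
    rw [abs_sub_le_iff]
    constructor
    · have : (FA.card : ℝ) = ((FA ∩ FB).card : ℝ) + ((FA \ FB).card : ℝ) := by exact_mod_cast h1.symm
      have h2' : (FB.card : ℝ) = ((FA ∩ FB).card : ℝ) + ((FB \ FA).card : ℝ) := by exact_mod_cast h2.symm
      have hpos : (0:ℝ) ≤ ((FB \ FA).card : ℝ) := by positivity
      rw [haa, hbb]; linarith
    · have : (FA.card : ℝ) = ((FA ∩ FB).card : ℝ) + ((FA \ FB).card : ℝ) := by exact_mod_cast h1.symm
      have h2' : (FB.card : ℝ) = ((FA ∩ FB).card : ℝ) + ((FB \ FA).card : ℝ) := by exact_mod_cast h2.symm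
      have hpos : (0:ℝ) ≤ ((FA \ FB).card : ℝ) := by positivity
      rw [haa, hbb]; linarith
  have hsum_bound : ∀ (X : Finset ℕ), |∑ s ∈ X, φ s| ≤ G * X.card := by
    intro X
    refine le_trans (Finset.abs_sum_le_sum_abs _ _) ?_
    calc ∑ s ∈ X, |φ s| ≤ ∑ _s ∈ X, G := Finset.sum_le_sum (fun s _ => hg _)
      _ = G * X.card := by rw [Finset.sum_const, nsmul_eq_mul, mul_comm]
  have hSASB : |∑ s ∈ FA, φ s - ∑ s ∈ FB, φ s| ≤ G * d := by
    have hdecomp : ∑ s ∈ FA, φ s - ∑ s ∈ FB, φ s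
        = ∑ s ∈ FA \ FB, φ s - ∑ s ∈ FB \ FA, φ s := by
      have h1 : ∑ s ∈ FA ∩ FB, φ s + ∑ s ∈ FA \ FB, φ s = ∑ s ∈ FA, φ s := by
        rw [Finset.sum_inter_add_sum_sdiff]
      have h2 : ∑ s ∈ FA ∩ FB, φ s + ∑ s ∈ FB \ FA, φ s = ∑ s ∈ FB, φ s := by
        rw [Finset.inter_comm, Finset.sum_inter_add_sum_sdiff]
      linarith
    rw [hdecomp]
    refine le_trans (abs_sub _ _) ?_
    have b1 := hsum_bound (FA \ FB)
    have b2 := hsum_bound (FB \ FA)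
    nlinarith [hcard]
  have hSB : |∑ s ∈ FB, φ s| ≤ G * b := hsum_bound FB
  have key : empAvg A β N g - empAvg B β N g
      = a⁻¹ * (∑ s ∈ FA, φ s - ∑ s ∈ FB, φ s) + (a⁻¹ - b⁻¹) * ∑ s ∈ FB, φ s := by
    unfold empAvg
    rw [← hFA, ← hFB, ← haa, ← hbb]
    ring
  rw [key]
  have hd0 : (0:ℝ) ≤ d := by positivity
  have e1 : |a⁻¹ * (∑ s ∈ FA, φ s - ∑ s ∈ FB, φ s)| ≤ a⁻¹ * (G * d) := by
    rw [abs_mul, abs_of_pos (inv_pos.2 hapos)]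
    exact mul_le_mul_of_nonneg_left hSASB (le_of_lt (inv_pos.2 hapos))
  have e2 : |(a⁻¹ - b⁻¹) * ∑ s ∈ FB, φ s| ≤ G * d / a := by
    rw [abs_mul]
    have hinv : |a⁻¹ - b⁻¹| = |b - a| / (a * b) := by
      rw [show a⁻¹ - b⁻¹ = (b - a) / (a * b) by field_simp, abs_div,
        abs_of_pos (mul_pos hapos hbpos)]
    rw [hinv, abs_sub_comm]
    calc |a - b| / (a * b) * |∑ s ∈ FB, φ s| ≤ d / (a * b) * (G * b) := by
          refine mul_le_mul ?_ hSB (abs_nonneg _) (by positivity)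
          gcongr
      _ = G * d / a := by field_simp
  calc |a⁻¹ * (∑ s ∈ FA, φ s - ∑ s ∈ FB, φ s) + (a⁻¹ - b⁻¹) * ∑ s ∈ FB, φ s|
      ≤ a⁻¹ * (G * d) + G * d / a := le_trans (abs_add_le _ _) (add_le_add e1 e2)
    _ = 2 * G * d / a := by field_simp; ring

lemma eventually_emp_compare (hR : R.Infinite) {θ δ G : ℝ} (hθ : 0 < θ) (hG : 0 ≤ G)
    (hAd : ∀ᶠ N in atTop, θ ≤ ((initSeg A N).card : ℝ) / (cntR R N : ℝ))
    (hBd : ∀ᶠ N in atTop, θ ≤ ((initSeg B N).card : ℝ) / (cntR R N : ℝ))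
    (hΔ : ∀ᶠ N in atTop, ((initSeg (A ∆ B) N).card : ℝ) / (cntR R N : ℝ) ≤ δ)
    (β : ℝ) (g : UnitAddCircle → ℝ) (hg : ∀ x, |g x| ≤ G) :
    ∀ᶠ N in atTop, |empAvg A β N g - empAvg B β N g| ≤ 2 * G * δ / θ := by
  filter_upwards [eventually_cntR_pos hR, hAd, hBd, hΔ] with N h0 h1 h2 h3
  have hc : (0:ℝ) < (cntR R N : ℝ) := by exact_mod_cast h0
  have ha' : θ * (cntR R N : ℝ) ≤ ((initSeg A N).card : ℝ) := by
    rw [← le_div_iff₀ hc] at *; exact h1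
  have hb' : θ * (cntR R N : ℝ) ≤ ((initSeg B N).card : ℝ) := by
    rw [← le_div_iff₀ hc] at *; exact h2
  have hd' : ((initSeg (A ∆ B) N).card : ℝ) ≤ δ * (cntR R N : ℝ) := by
    rw [← div_le_iff₀ hc] at *; exact h3
  have hθc : (0:ℝ) < θ * (cntR R N : ℝ) := by positivity
  have ha : 0 < (initSeg A N).card := by
    by_contra h; push_neg at h
    interval_cases h' : (initSeg A N).card
    · simp [h'] at ha'; nlinarith
  have hb : 0 < (initSeg B N).card := by
    by_contra h; push_neg at h
    interval_cases h' : (initSeg B N).card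
    · simp [h'] at hb'; nlinarith
  refine le_trans (emp_compare A B β g G hg N ha hb) ?_
  have hapos : (0:ℝ) < ((initSeg A N).card : ℝ) := by exact_mod_cast ha
  have hδ : 0 ≤ δ := by
    have := le_trans (by positivity : (0:ℝ) ≤ ((initSeg (A ∆ B) N).card : ℝ) / (cntR R N : ℝ)) h3
    exact this
  calc 2 * G * ((initSeg (A ∆ B) N).card : ℝ) / ((initSeg A N).card : ℝ)
      ≤ 2 * G * (δ * (cntR R N : ℝ)) / (θ * (cntR R N : ℝ)) := by
        gcongr
    _ = 2 * G * δ / θ := by field_simp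

lemma abs_lim_sub_le {u v : ℕ → ℝ} {x y C : ℝ} (hu : Tendsto u atTop (𝓝 x))
    (hv : Tendsto v atTop (𝓝 y)) (h : ∀ᶠ N in atTop, |u N - v N| ≤ C) : |x - y| ≤ C :=
  le_of_tendsto ((hu.sub hv).abs) h

end Aux3

section Aux4

lemma contInt (μ : Measure UnitAddCircle) [IsFiniteMeasure μ] (g : UnitAddCircle → ℝ)
    (hg : Continuous g) : Integrable g μ :=
  hg.integrable_of_hasCompactSupport
    (IsCompact.of_isClosed_subset isCompact_univ (isClosed_tsupport _) (Set.subset_univ _))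

lemma eventually_empAvg_const {S : Set ℕ} (hS : S.Infinite) (α : ℝ) :
    ∀ᶠ N in Filter.atTop, empAvg S α N (fun _ => (1:ℝ)) = 1 := by
  obtain ⟨s, hsS, hs0⟩ := hS.exists_gt 0
  filter_upwards [Filter.eventually_ge_atTop s] with N hN
  have hmem : s ∈ initSeg S N := by
    simp only [initSeg, Finset.mem_filter, Finset.mem_Icc]
    exact ⟨⟨hs0, hN⟩, hsS⟩
  have hcard : (initSeg S N).card ≠ 0 := by
    intro h
    rw [Finset.card_eq_zero] at h
    simp [h] at hmem
  unfold empAvg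
  rw [Finset.sum_const, nsmul_eq_mul, mul_one, inv_mul_cancel₀ (by exact_mod_cast hcard)]

lemma isProb_of_isLimitMeasure {S : Set ℕ} (hS : S.Infinite) {α : ℝ}
    {μ : Measure UnitAddCircle} (h : IsLimitMeasure S α μ) : IsProbabilityMeasure μ := by
  have h1 := h (ContinuousMap.const _ 1)
  have h2 : Filter.Tendsto (fun _ : ℕ => (1:ℝ)) Filter.atTop (𝓝 (∫ x, (1:ℝ) ∂μ)) := by
    refine Filter.Tendsto.congr' ?_ h1
    filter_upwards [eventually_empAvg_const hS α] with N hN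
    simpa using hN
  have h3 : ∫ x, (1:ℝ) ∂μ = 1 := tendsto_nhds_unique h2 tendsto_const_nhds
  rw [integral_const, smul_eq_mul, mul_one] at h3
  exact ⟨(ENNReal.toReal_eq_one_iff _).1 h3⟩

lemma integral_tendsto_of_isLimitMeasure {S : Set ℕ} {α : ℝ} {μ ν : Measure UnitAddCircle}
    (hμ : IsLimitMeasure S α μ) (hν : IsLimitMeasure S α ν) (g : C(UnitAddCircle, ℝ)) :
    ∫ x, g x ∂μ = ∫ x, g x ∂ν :=
  tendsto_nhds_unique (hμ g) (hν g)

lemma set_bound_of_integral_bound_aux {μ ν : Measure UnitAddCircle}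
    [IsProbabilityMeasure μ] [IsProbabilityMeasure ν] {ε : ℝ}
    (h : ∀ g : C(UnitAddCircle, ℝ), (∀ x, |g x| ≤ 1) → ∫ x, g x ∂μ - ∫ x, g x ∂ν ≤ ε)
    {B : Set UnitAddCircle} (hB : MeasurableSet B) :
    (μ B).toReal ≤ (ν B).toReal + ε := by
  have key : ∀ η : ℝ, 0 < η → (μ B).toReal ≤ (ν B).toReal + ε + η := by
    intro η hη
    have hη2 : (0:ℝ) < η / 2 := by linarith
    have hηE : ENNReal.ofReal (η/2) ≠ 0 := by
      simp [ENNReal.ofReal_eq_zero, not_le, hη2]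
    obtain ⟨K, hKB, hKclosed, hKlt⟩ :=
      hB.exists_isClosed_lt_add (μ := μ) (measure_ne_top μ B) hηE
    obtain ⟨U, hKU, hUopen, hUlt⟩ :=
      Set.exists_isOpen_lt_add (μ := ν) K (measure_ne_top ν K) hηE
    obtain ⟨f, hf0, hf1, hf01⟩ := exists_continuous_zero_one_of_isClosed
      hUopen.isClosed_compl hKclosed
      (Set.disjoint_left.2 fun x hx hxK => hx (hKU hxK))
    have hfabs : ∀ x, |f x| ≤ 1 := by
      intro x
      obtain ⟨h0, h1⟩ := hf01 x
      rw [abs_le]; constructor <;> linarith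
    have hint_μ : Integrable (fun x => f x) μ := contInt μ _ (map_continuous f)
    have hint_ν : Integrable (fun x => f x) ν := contInt ν _ (map_continuous f)
    have step1 : (μ K).toReal ≤ ∫ x, f x ∂μ := by
      have : ∫ x, Set.indicator K (fun _ => (1:ℝ)) x ∂μ ≤ ∫ x, f x ∂μ := by
        refine integral_mono ((integrable_indicator_iff hKclosed.measurableSet).2
          (integrableOn_const (measure_ne_top μ K))) hint_μ ?_
        intro x
        by_cases hx : x ∈ K
        · simp [Set.indicator_of_mem hx, hf1 hx]
        · simp [Set.indicator_of_notMem hx, (hf01 x).1]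
      rwa [integral_indicator_const _ hKclosed.measurableSet, smul_eq_mul, mul_one] at this
    have step2 : ∫ x, f x ∂ν ≤ (ν U).toReal := by
      have : ∫ x, f x ∂ν ≤ ∫ x, Set.indicator U (fun _ => (1:ℝ)) x ∂ν := by
        refine integral_mono hint_ν ((integrable_indicator_iff hUopen.measurableSet).2
          (integrableOn_const (measure_ne_top ν U))) ?_
        intro x
        by_cases hx : x ∈ U
        · simp [Set.indicator_of_mem hx, (hf01 x).2]
        · have : f x = 0 := hf0 hx
          simp [Set.indicator_of_notMem hx, this]
      rwa [integral_indicator_const _ hUopen.measurableSet, smul_eq_mul, mul_one] at this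
    have hμBK : (μ B).toReal ≤ (μ K).toReal + η/2 := by
      have := le_of_lt hKlt
      calc (μ B).toReal ≤ ((μ K) + ENNReal.ofReal (η/2)).toReal :=
            ENNReal.toReal_mono (by finiteness) this
        _ = (μ K).toReal + η/2 := by
            rw [ENNReal.toReal_add (measure_ne_top μ K) ENNReal.ofReal_ne_top,
              ENNReal.toReal_ofReal (le_of_lt hη2)]
    have hνUK : (ν U).toReal ≤ (ν K).toReal + η/2 := by
      have := le_of_lt hUlt
      calc (ν U).toReal ≤ ((ν K) + ENNReal.ofReal (η/2)).toReal :=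
            ENNReal.toReal_mono (by finiteness) this
        _ = (ν K).toReal + η/2 := by
            rw [ENNReal.toReal_add (measure_ne_top ν K) ENNReal.ofReal_ne_top,
              ENNReal.toReal_ofReal (le_of_lt hη2)]
    have hνKB : (ν K).toReal ≤ (ν B).toReal :=
      ENNReal.toReal_mono (measure_ne_top ν B) (measure_mono hKB)
    have hint := h f hfabs
    linarith
  by_contra hcon
  push_neg at hcon
  have := key (((μ B).toReal - (ν B).toReal - ε) / 2) (by linarith)
  linarith

lemma set_bound_of_integral_bound {μ ν : Measure UnitAddCircle}
    [IsProbabilityMeasure μ] [IsProbabilityMeasure ν] {ε : ℝ}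
    (h : ∀ g : C(UnitAddCircle, ℝ), (∀ x, |g x| ≤ 1) → |∫ x, g x ∂μ - ∫ x, g x ∂ν| ≤ ε)
    {B : Set UnitAddCircle} (hB : MeasurableSet B) :
    |(μ B).toReal - (ν B).toReal| ≤ ε := by
  rw [abs_sub_le_iff]
  constructor
  · have := set_bound_of_integral_bound_aux
      (fun g hg => (abs_le.1 (h g hg)).2) hB
    linarith
  · have := set_bound_of_integral_bound_aux (μ := ν) (ν := μ)
      (fun g hg => by
        have := (abs_le.1 (h g hg)).1
        linarith) hB
    linarith

end Aux4

section Aux5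
variable {X : Type*} [MeasurableSpace X]

lemma abs_integral_le {Y : Type*} [MeasurableSpace Y] (m : Measure Y) (h : Y → ℝ) :
    |∫ x, h x ∂m| ≤ ∫ x, |h x| ∂m := by
  rw [← Real.norm_eq_abs]
  refine le_trans (norm_integral_le_integral_norm h) ?_
  simp [Real.norm_eq_abs]

lemma exists_limit_measure (ν : ℕ → Measure X) (hprob : ∀ k, IsProbabilityMeasure (ν k))
    (e : ℕ → ℝ) (he : Tendsto e atTop (𝓝 0))
    (hset : ∀ j k, ∀ B : Set X, MeasurableSet B →
      |((ν j) B).toReal - ((ν k) B).toReal| ≤ e j + e k) :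
    ∃ μ : Measure X, IsProbabilityMeasure μ ∧
      ∀ g : X → ℝ, Measurable g → ∀ G, (∀ x, |g x| ≤ G) →
        Tendsto (fun k => ∫ x, g x ∂(ν k)) atTop (𝓝 (∫ x, g x ∂μ)) := by
  classical
  haveI := hprob
  -- the dominating measure
  set ρ : Measure X := Measure.sum (fun k => ((2:ℝ≥0∞)⁻¹) ^ (k+1) • ν k) with hρ
  haveI hρfin : IsFiniteMeasure ρ := by
    constructor
    rw [hρ, Measure.sum_apply _ MeasurableSet.univ]
    calc ∑' k, (((2:ℝ≥0∞)⁻¹) ^ (k+1) • ν k) Set.univ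
        = ∑' k, ((2:ℝ≥0∞)⁻¹) ^ (k+1) := by
          refine tsum_congr fun k => ?_
          rw [Measure.smul_apply, measure_univ, smul_eq_mul, mul_one]
      _ ≤ ∑' k : ℕ, ((2:ℝ≥0∞)⁻¹) ^ k := by
          refine Summable.tsum_le_tsum (fun k => ?_) ENNReal.summable ENNReal.summable
          exact pow_le_pow_of_le_one (by simp) (by simp [ENNReal.inv_le_one]) (by omega)
      _ = (1 - 2⁻¹)⁻¹ := ENNReal.tsum_geometric _
      _ < ⊤ := by
          rw [lt_top_iff_ne_top]
          refine ENNReal.inv_ne_top.2 ?_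
          rw [Ne, tsub_eq_zero_iff_le]
          exact not_le.2 (ENNReal.inv_lt_one.mpr (by norm_num))
  have hac : ∀ k, ν k ≪ ρ := by
    intro k
    have h1 : ν k ≪ ((2:ℝ≥0∞)⁻¹) ^ (k+1) • ν k := by
      refine Measure.AbsolutelyContinuous.mk fun s hs h0 => ?_
      rw [Measure.smul_apply, smul_eq_mul] at h0
      rcases mul_eq_zero.1 h0 with h | h
      · exact absurd h (pow_ne_zero _ (ENNReal.inv_ne_zero.2 ENNReal.ofNat_ne_top))
      · exact h
    exact h1.trans (Measure.absolutelyContinuous_of_le (Measure.le_sum _ k))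
  -- the densities
  set f : ℕ → X → ℝ := fun k x => ((ν k).rnDeriv ρ x).toReal with hf
  have hInt : ∀ k, Integrable (f k) ρ := fun k => Measure.integrable_toReal_rnDeriv
  have hmeas : ∀ k, Measurable (f k) := fun k =>
    (Measure.measurable_rnDeriv _ _).ennreal_toReal
  have hf_nonneg : ∀ k x, 0 ≤ f k x := fun k x => ENNReal.toReal_nonneg
  have hsetInt : ∀ k (B : Set X), ∫ x in B, f k x ∂ρ = ((ν k) B).toReal := fun k B =>
    Measure.setIntegral_toReal_rnDeriv (hac k) B
  -- L¹ Cauchy estimate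
  have hL1 : ∀ j k, ∫ x, |f j x - f k x| ∂ρ ≤ 2 * (e j + e k) := by
    intro j k
    set B : Set X := {x | f k x ≤ f j x} with hB
    have hBm : MeasurableSet B := measurableSet_le (hmeas k) (hmeas j)
    have hint_diff : Integrable (fun x => |f j x - f k x|) ρ := ((hInt j).sub (hInt k)).abs
    have hsplit : ∫ x, |f j x - f k x| ∂ρ
        = ∫ x in B, |f j x - f k x| ∂ρ + ∫ x in Bᶜ, |f j x - f k x| ∂ρ :=
      (integral_add_compl hBm hint_diff).symm
    have h1 : ∫ x in B, |f j x - f k x| ∂ρ = ((ν j) B).toReal - ((ν k) B).toReal := by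
      rw [show ∫ x in B, |f j x - f k x| ∂ρ = ∫ x in B, (f j x - f k x) ∂ρ from
        setIntegral_congr_fun hBm (fun x hx => abs_of_nonneg (sub_nonneg.2 hx))]
      rw [integral_sub ((hInt j).integrableOn) ((hInt k).integrableOn),
        hsetInt j B, hsetInt k B]
    have h2 : ∫ x in Bᶜ, |f j x - f k x| ∂ρ = ((ν k) Bᶜ).toReal - ((ν j) Bᶜ).toReal := by
      rw [show ∫ x in Bᶜ, |f j x - f k x| ∂ρ = ∫ x in Bᶜ, (f k x - f j x) ∂ρ from
        setIntegral_congr_fun hBm.compl (fun x hx => by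
          rw [abs_sub_comm]
          exact abs_of_nonneg (sub_nonneg.2 (le_of_not_ge hx)))]
      rw [integral_sub ((hInt k).integrableOn) ((hInt j).integrableOn),
        hsetInt k Bᶜ, hsetInt j Bᶜ]
    have b1 := hset j k B hBm
    have b2 := hset j k Bᶜ hBm.compl
    rw [hsplit, h1, h2]
    rw [abs_le] at b1 b2
    linarith [b1.1, b1.2, b2.1, b2.2]
  -- pass to L¹ space
  set F : ℕ → (X →₁[ρ] ℝ) := fun k => (hInt k).toL1 (f k) with hF
  have hdist : ∀ j k, dist (F j) (F k) ≤ 2 * (e j + e k) := by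
    intro j k
    rw [dist_eq_norm, hF]
    rw [← Integrable.toL1_sub _ _ (hInt j) (hInt k)]
    rw [L1.norm_of_fun_eq_integral_norm]
    simpa using hL1 j k
  have he_nonneg : ∀ k, 0 ≤ e k := by
    intro k
    have := hset k k Set.univ MeasurableSet.univ
    simp at this
    linarith
  have hcauchy : CauchySeq F := by
    rw [Metric.cauchySeq_iff']
    intro ε hε
    have : ∀ᶠ k in atTop, e k < ε / 5 := by
      have := he.eventually (gt_mem_nhds (show (0:ℝ) < ε/5 by linarith))
      exact this
    obtain ⟨K, hK⟩ := eventually_atTop.1 this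
    refine ⟨K, fun n hn => ?_⟩
    calc dist (F n) (F K) ≤ 2 * (e n + e K) := hdist n K
      _ < 2 * (ε/5 + ε/5) := by
          have := hK n hn; have := hK K le_rfl
          nlinarith
      _ < ε := by linarith
  obtain ⟨L, hLtend⟩ := cauchySeq_tendsto_of_complete hcauchy
  have hLint : Integrable (⇑L) ρ := L1.integrable_coeFn L
  have hconv : Tendsto (fun k => ∫ x, |f k x - L x| ∂ρ) atTop (𝓝 0) := by
    have hdk : ∀ k, ∫ x, |f k x - L x| ∂ρ = dist (F k) L := by
      intro k
      rw [dist_eq_norm, L1.norm_eq_integral_norm]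
      refine integral_congr_ae ?_
      filter_upwards [Lp.coeFn_sub (F k) L, (hInt k).coeFn_toL1] with x h1 h2
      rw [Real.norm_eq_abs, h1, Pi.sub_apply, h2]
    have : Tendsto (fun k => dist (F k) L) atTop (𝓝 0) :=
      tendsto_iff_dist_tendsto_zero.1 hLtend
    refine this.congr fun k => ?_
    exact (hdk k).symm
  -- L is a.e. nonnegative
  have hPint : Integrable (fun x => (L x - |L x|)/2) ρ := (hLint.sub hLint.abs).div_const 2
  have hP0 : (fun x => (L x - |L x|)/2) =ᵐ[ρ] 0 := by
    have hbound : ∀ k x, |(L x - |L x|)/2| ≤ |f k x - L x| := by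
      intro k x
      rcases le_or_gt 0 (L x) with h | h
      · rw [abs_of_nonneg h]
        simp [abs_nonneg]
      · rw [abs_of_neg h, show (L x - - L x)/2 = L x by ring, abs_of_neg h]
        have h1 : 0 ≤ f k x := hf_nonneg k x
        rw [abs_of_nonneg (show (0:ℝ) ≤ f k x - L x by linarith)]
        linarith
    have hint0 : ∀ k, ∫ x, |(L x - |L x|)/2| ∂ρ ≤ ∫ x, |f k x - L x| ∂ρ :=
      fun k => integral_mono hPint.abs ((hInt k).sub hLint).abs (fun x => hbound k x)
    have h0 : ∫ x, |(L x - |L x|)/2| ∂ρ ≤ 0 :=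
      ge_of_tendsto hconv (Eventually.of_forall hint0)
    have h1 : ∫ x, |(L x - |L x|)/2| ∂ρ = 0 :=
      le_antisymm h0 (integral_nonneg fun x => abs_nonneg _)
    have h2 := (integral_eq_zero_iff_of_nonneg (fun x => abs_nonneg ((L x - |L x|)/2))
      hPint.abs).1 h1
    filter_upwards [h2] with x hx
    have : |(L x - |L x|)/2| = 0 := hx
    rw [abs_eq_zero] at this
    exact this
  have hLnonneg : 0 ≤ᵐ[ρ] ⇑L := by
    filter_upwards [hP0] with x hx
    have : (L x - |L x|)/2 = 0 := hx
    have h2 : L x = |L x| := by linarith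
    rw [h2]; exact abs_nonneg _
  -- the limit measure
  set μ : Measure X := ρ.withDensity (fun x => ((Real.toNNReal (L x) : ℝ≥0) : ℝ≥0∞)) with hμ
  have hLae : AEMeasurable (fun x => Real.toNNReal (L x)) ρ :=
    measurable_real_toNNReal.comp_aemeasurable hLint.1.aemeasurable
  -- ∫ L ∂ρ = 1
  have hintL : ∫ x, L x ∂ρ = 1 := by
    have h1 : ∀ k, ∫ x, f k x ∂ρ = 1 := by
      intro k
      rw [hf]
      simp only []
      rw [Measure.integral_toReal_rnDeriv (hac k)]
      simp
    have h2 : Tendsto (fun k => ∫ x, f k x ∂ρ) atTop (𝓝 (∫ x, L x ∂ρ)) := by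
      rw [tendsto_iff_dist_tendsto_zero]
      refine squeeze_zero (fun k => dist_nonneg) (fun k => ?_) hconv
      rw [Real.dist_eq, ← integral_sub (hInt k) hLint]
      exact abs_integral_le ρ (fun x => f k x - L x)
    have h3 : Tendsto (fun _ : ℕ => (1:ℝ)) atTop (𝓝 (∫ x, L x ∂ρ)) := by
      refine h2.congr fun k => h1 k
    exact tendsto_nhds_unique h3 tendsto_const_nhds
  haveI hμprob : IsProbabilityMeasure μ := by
    constructor
    rw [hμ, withDensity_apply _ MeasurableSet.univ, Measure.restrict_univ]
    have h1 : ENNReal.ofReal (∫ x, L x ∂ρ) = ∫⁻ x, ENNReal.ofReal (L x) ∂ρ :=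
      ofReal_integral_eq_lintegral_ofReal hLint hLnonneg
    rw [hintL] at h1
    have h2 : (∫⁻ x, ENNReal.ofReal (L x) ∂ρ)
        = ∫⁻ x, ((Real.toNNReal (L x) : ℝ≥0) : ℝ≥0∞) ∂ρ := rfl
    rw [← h2, ← h1]
    simp
  -- integrability of bounded measurable functions
  have hgInt : ∀ (g : X → ℝ), Measurable g → ∀ G, (∀ x, |g x| ≤ G) →
      ∀ (m : Measure X), IsFiniteMeasure m → Integrable g m := by
    intro g hgmeas G hgG m hm
    exact ⟨hgmeas.aestronglyMeasurable,
      HasFiniteIntegral.of_bounded (C := G)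
        (Eventually.of_forall (fun x => (Real.norm_eq_abs _) ▸ hgG x))⟩
  refine ⟨μ, hμprob, ?_⟩
  intro g hgmeas G hgG
  have hgρ : Integrable g ρ := hgInt g hgmeas G hgG ρ hρfin
  have hgL : Integrable (fun x => g x * L x) ρ :=
    Integrable.bdd_mul (c := G) hLint hgmeas.aestronglyMeasurable
      (Eventually.of_forall fun x => (Real.norm_eq_abs _) ▸ hgG x)
  have hgf : ∀ k, Integrable (fun x => g x * f k x) ρ := fun k =>
    Integrable.bdd_mul (c := G) (hInt k) hgmeas.aestronglyMeasurable
      (Eventually.of_forall fun x => (Real.norm_eq_abs _) ▸ hgG x)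
  -- integral with respect to ν k
  have hket : ∀ k, ∫ x, g x ∂(ν k) = ∫ x, g x * f k x ∂ρ := by
    intro k
    conv_lhs => rw [← Measure.withDensity_rnDeriv_eq _ _ (hac k)]
    have hae : (ν k).rnDeriv ρ =ᵐ[ρ] fun x => ((((ν k).rnDeriv ρ x).toNNReal : ℝ≥0) : ℝ≥0∞) := by
      filter_upwards [Measure.rnDeriv_lt_top (ν k) ρ] with x hx
      rw [ENNReal.coe_toNNReal hx.ne]
    rw [withDensity_congr_ae hae,
      integral_withDensity_eq_integral_smul₀
        ((Measure.measurable_rnDeriv _ _).ennreal_toNNReal).aemeasurable g]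
    refine integral_congr_ae (Eventually.of_forall fun x => ?_)
    simp only [NNReal.smul_def, smul_eq_mul, hf]
    rw [mul_comm]
    rfl
  -- integral with respect to μ
  have hμg : ∫ x, g x ∂μ = ∫ x, g x * L x ∂ρ := by
    rw [hμ, integral_withDensity_eq_integral_smul₀ hLae g]
    refine integral_congr_ae ?_
    filter_upwards [hLnonneg] with x hx
    simp only [NNReal.smul_def, smul_eq_mul]
    rw [Real.coe_toNNReal _ hx, mul_comm]
  -- conclusion
  rw [tendsto_iff_dist_tendsto_zero]
  have hsq : ∀ k, dist (∫ x, g x ∂(ν k)) (∫ x, g x ∂μ) ≤ (∫ x, |f k x - L x| ∂ρ) * G := by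
    intro k
    rw [Real.dist_eq, hket k, hμg, ← integral_sub (hgf k) hgL]
    refine le_trans (abs_integral_le ρ (fun x => g x * f k x - g x * L x)) ?_
    have heq : ∀ x, |g x * f k x - g x * L x| = |g x| * |f k x - L x| := by
      intro x
      rw [← mul_sub, abs_mul]
    calc ∫ x, |g x * f k x - g x * L x| ∂ρ
        ≤ ∫ x, |f k x - L x| * G ∂ρ := by
          refine integral_mono ((hgf k).sub hgL).abs
            ((((hInt k).sub hLint).abs).mul_const G) (fun x => ?_)
          rw [heq x, mul_comm]
          exact mul_le_mul_of_nonneg_left (hgG x) (abs_nonneg _)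
      _ = (∫ x, |f k x - L x| ∂ρ) * G := by rw [integral_mul_const]
  refine squeeze_zero (fun k => dist_nonneg) hsq ?_
  have := hconv.mul_const G
  simpa using this

end Aux5


-- auxiliary: ε-removal
lemma bound_eps_removal {a b K q : ℝ} (hq : 0 < q) (hK : 0 ≤ K)
    (h : ∀ ε : ℝ, 0 < ε → a ≤ 2 * K * (b + ε) / q) : a ≤ 2 * K * b / q := by
  refine le_of_forall_pos_le_add fun ε' hε' => ?_
  rcases eq_or_lt_of_le hK with hK0 | hK0
  · have := h 1 one_pos
    rw [← hK0] at this ⊢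
    simp only [mul_zero, zero_mul, zero_div] at this ⊢
    linarith
  · have := h (ε' * q / (2 * K)) (by positivity)
    have heq : 2 * K * (b + ε' * q / (2 * K)) / q = 2 * K * b / q + ε' := by
      field_simp
    linarith [heq ▸ this]

lemma abs_ratio_sub_le (R A B : Set ℕ) (N : ℕ) :
    |(relCount R A N : ℝ) / N - (relCount R B N : ℝ) / N|
      ≤ (relCount R (A ∆ B) N : ℝ) / N := by
  rcases Nat.eq_zero_or_pos N with h | h
  · simp [h]
  · have hN : (0:ℝ) < N := by exact_mod_cast h
    rw [div_sub_div_same, abs_div, abs_of_pos hN]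
    exact div_le_div_of_nonneg_right (abs_relCount_sub_le R A B N) hN.le |>.trans_eq rfl

lemma ratio_symmDiff_triangle (R A B C : Set ℕ) (N : ℕ) :
    (relCount R (A ∆ B) N : ℝ) / N
      ≤ (relCount R (A ∆ C) N : ℝ) / N + (relCount R (C ∆ B) N : ℝ) / N := by
  rcases Nat.eq_zero_or_pos N with h | h
  · simp [h]
  · have hN : (0:ℝ) < N := by exact_mod_cast h
    rw [← add_div]
    have := symmDiff_relCount_triangle R A B C N
    have h2 : (relCount R (A ∆ B) N : ℝ) ≤ (relCount R (A ∆ C) N : ℝ) + relCount R (C ∆ B) N := by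
      exact_mod_cast this
    exact div_le_div_of_nonneg_right h2 hN.le |>.trans_eq rfl

lemma symmDiff_subset_of_subsets {A B R : Set ℕ} (hA : A ⊆ R) (hB : B ⊆ R) : A ∆ B ⊆ R := by
  intro x hx
  rcases Set.mem_symmDiff.1 hx with ⟨h, _⟩ | ⟨h, _⟩
  · exact hA h
  · exact hB h

lemma varDist_nonneg (μ ν : MeasureTheory.Measure UnitAddCircle) : 0 ≤ varDist μ ν :=
  Real.iSup_nonneg fun _ => Real.iSup_nonneg fun _ => abs_nonneg _

lemma varDist_le {μ ν : MeasureTheory.Measure UnitAddCircle} {ε : ℝ} (hε : 0 ≤ ε)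
    (h : ∀ B : Set UnitAddCircle, MeasurableSet B → |(μ B).toReal - (ν B).toReal| ≤ ε) :
    varDist μ ν ≤ ε := by
  refine Real.iSup_le (fun B => ?_) hε
  by_cases hB : MeasurableSet B
  · exact Real.iSup_le (fun _ => h B hB) hε
  · haveI : IsEmpty (MeasurableSet B) := ⟨hB⟩
    rw [Real.iSup_of_isEmpty]
    exact hε

/-- a `‖·‖₁`-convergent sequence of good subsets of `R` with means, with
positive limsup of means, has a good limit set; the means converge to the mean of the limit,
and the limit measures converge in total variation uniformly in `β`. -/
theorem limit_of_good_sets (R : Set ℕ) (hR : IsGoodSet R)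
    (S : ℕ → Set ℕ) (hSR : ∀ k, S k ⊆ R) (hSgood : ∀ k, IsGoodSet (S k))
    (m : ℕ → ℝ)
    (hm : ∀ k, Tendsto (fun N => (relCount R (S k) N : ℝ) / N) atTop (𝓝 (m k)))
    (T : Set ℕ) (hTR : T ⊆ R)
    (hconv : Tendsto
      (fun k => Filter.limsup (fun N => (relCount R (symmDiff (S k) T) N : ℝ) / N) atTop)
      atTop (𝓝 0))
    (hpos : 0 < Filter.limsup m atTop) :
    (∃ c : ℝ, 0 < c ∧ Tendsto m atTop (𝓝 c) ∧
        Tendsto (fun N => (relCount R T N : ℝ) / N) atTop (𝓝 c)) ∧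
    IsGoodSet T ∧
    ∀ μk : ℕ → ℝ → MeasureTheory.Measure UnitAddCircle,
      ∀ μT : ℝ → MeasureTheory.Measure UnitAddCircle,
        (∀ k β, IsLimitMeasure (S k) β (μk k β)) →
        (∀ β, IsLimitMeasure T β (μT β)) →
        Tendsto (fun k => ⨆ β : ℝ, varDist (μk k β) (μT β)) atTop (𝓝 0) := by
  classical
  obtain ⟨hRinf, -⟩ := hR
  set d : ℕ → ℝ := fun k =>
    Filter.limsup (fun N => (relCount R (symmDiff (S k) T) N : ℝ) / N) atTop with hd
  have hdtend : Tendsto d atTop (𝓝 0) := hconv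
  have hd0 : ∀ k, 0 ≤ d k := fun k => limsup_ratio_nonneg R _
  have hdlt : ∀ k (ε : ℝ), 0 < ε → ∀ᶠ N in atTop,
      (relCount R (symmDiff (S k) T) N : ℝ) / N < d k + ε := by
    intro k ε hε
    refine eventually_ratio_lt ?_
    rw [hd]
    exact lt_add_of_pos_right _ hε
  -- pairwise bound on the means
  have hmd : ∀ k j, |m k - m j| ≤ d k + d j := by
    intro k j
    refine le_of_forall_pos_le_add fun ε hε => ?_
    refine abs_lim_sub_le (hm k) (hm j) ?_
    filter_upwards [hdlt k (ε/2) (by linarith), hdlt j (ε/2) (by linarith)] with N h1 h2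
    calc |(relCount R (S k) N : ℝ) / N - (relCount R (S j) N : ℝ) / N|
        ≤ (relCount R (S k ∆ S j) N : ℝ) / N := abs_ratio_sub_le R _ _ N
      _ ≤ (relCount R (S k ∆ T) N : ℝ) / N + (relCount R (T ∆ S j) N : ℝ) / N :=
          ratio_symmDiff_triangle R _ _ T N
      _ = (relCount R (symmDiff (S k) T) N : ℝ) / N
          + (relCount R (symmDiff (S j) T) N : ℝ) / N := by rw [symmDiff_comm T (S j)]
      _ ≤ (d k + ε/2) + (d j + ε/2) := add_le_add h1.le h2.le
      _ = d k + d j + ε := by ring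
  have hcauchy : CauchySeq m := by
    rw [Metric.cauchySeq_iff]
    intro ε hε
    have h1 : ∀ᶠ k in atTop, d k < ε/3 :=
      hdtend.eventually (gt_mem_nhds (by linarith : (0:ℝ) < ε/3))
    obtain ⟨K, hK⟩ := eventually_atTop.1 h1
    refine ⟨K, fun i hi j hj => ?_⟩
    rw [Real.dist_eq]
    have := hmd i j
    have h2 := hK i hi
    have h3 := hK j hj
    linarith
  obtain ⟨c, hmc⟩ := cauchySeq_tendsto_of_complete hcauchy
  have hcpos : 0 < c := by rw [← hmc.limsup_eq]; exact hpos
  -- T density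
  set tT : ℕ → ℝ := fun N => (relCount R T N : ℝ) / N with htT
  have hT_ev_le : ∀ k (ε : ℝ), 0 < ε → ∀ᶠ N in atTop, tT N ≤ m k + d k + ε := by
    intro k ε hε
    have hmk : ∀ᶠ N in atTop, |(relCount R (S k) N : ℝ) / N - m k| < ε/2 := by
      have := Metric.tendsto_nhds.1 (hm k) (ε/2) (by linarith)
      simpa [Real.dist_eq] using this
    filter_upwards [hdlt k (ε/2) (by linarith), hmk] with N h1 h2
    have h3 : |tT N - (relCount R (S k) N : ℝ) / N|
        ≤ (relCount R (symmDiff (S k) T) N : ℝ) / N := by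
      rw [htT]
      have := abs_ratio_sub_le R T (S k) N
      rw [symmDiff_comm T (S k)] at this
      exact this
    rw [abs_lt] at h2
    rw [abs_le] at h3
    linarith [h3.2, h2.2]
  have hT_ev_ge : ∀ k (ε : ℝ), 0 < ε → ∀ᶠ N in atTop, m k - d k - ε ≤ tT N := by
    intro k ε hε
    have hmk : ∀ᶠ N in atTop, |(relCount R (S k) N : ℝ) / N - m k| < ε/2 := by
      have := Metric.tendsto_nhds.1 (hm k) (ε/2) (by linarith)
      simpa [Real.dist_eq] using this
    filter_upwards [hdlt k (ε/2) (by linarith), hmk] with N h1 h2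
    have h3 : |tT N - (relCount R (S k) N : ℝ) / N|
        ≤ (relCount R (symmDiff (S k) T) N : ℝ) / N := by
      rw [htT]
      have := abs_ratio_sub_le R T (S k) N
      rw [symmDiff_comm T (S k)] at this
      exact this
    rw [abs_lt] at h2
    rw [abs_le] at h3
    linarith [h3.1, h2.1]
  have hTbddA : IsBoundedUnder (· ≤ ·) atTop tT := ratio_bddAbove R T
  have hTbddB : IsBoundedUnder (· ≥ ·) atTop tT := ratio_bddBelow R T
  have hsup_le : Filter.limsup tT atTop ≤ c := by
    refine le_of_forall_pos_le_add fun ε hε => ?_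
    have h1 : ∀ᶠ k in atTop, |m k - c| < ε/3 := by
      have := Metric.tendsto_nhds.1 hmc (ε/3) (by linarith)
      simpa [Real.dist_eq] using this
    have h2 : ∀ᶠ k in atTop, d k < ε/3 :=
      hdtend.eventually (gt_mem_nhds (by linarith : (0:ℝ) < ε/3))
    obtain ⟨k, hk1, hk2⟩ := (h1.and h2).exists
    have h3 := hT_ev_le k (ε/3) (by linarith)
    have h4 : Filter.limsup tT atTop ≤ m k + d k + ε/3 := by
      refine limsup_le_of_le hTbddB.isCoboundedUnder_le ?_
      exact h3
    rw [abs_lt] at hk1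
    linarith [hk1.2]
  have hinf_ge : c ≤ Filter.liminf tT atTop := by
    refine le_of_forall_pos_le_add fun ε hε => ?_
    have h1 : ∀ᶠ k in atTop, |m k - c| < ε/3 := by
      have := Metric.tendsto_nhds.1 hmc (ε/3) (by linarith)
      simpa [Real.dist_eq] using this
    have h2 : ∀ᶠ k in atTop, d k < ε/3 :=
      hdtend.eventually (gt_mem_nhds (by linarith : (0:ℝ) < ε/3))
    obtain ⟨k, hk1, hk2⟩ := (h1.and h2).exists
    have h4 : m k - d k - ε/3 ≤ Filter.liminf tT atTop :=
      le_liminf_of_le hTbddA.isCoboundedUnder_ge (hT_ev_ge k (ε/3) (by linarith))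
    rw [abs_lt] at hk1
    linarith [hk1.1]
  have hTt : Tendsto tT atTop (𝓝 c) := by
    have hle : Filter.liminf tT atTop ≤ Filter.limsup tT atTop :=
      liminf_le_limsup hTbddA hTbddB
    exact tendsto_of_liminf_eq_limsup (le_antisymm (hle.trans hsup_le) hinf_ge)
      (le_antisymm hsup_le (hinf_ge.trans hle)) hTbddA hTbddB
  -- T is infinite
  have hTinf : T.Infinite := by
    by_contra hfin
    rw [Set.not_infinite] at hfin
    have hbd : ∀ N, relCount R T N ≤ hfin.toFinset.card := by
      intro N
      unfold relCount
      refine Finset.card_le_card_of_injOn (fun n => Nat.nth (· ∈ R) n) ?_ ?_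
      · intro n hn
        simp only [Finset.coe_filter, Finset.mem_coe, Finset.mem_filter, Set.mem_setOf_eq] at hn
        simpa using hn.2
      · intro a _ b _ hab
        exact Nat.nth_injective hRinf hab
    have h0 : Tendsto tT atTop (𝓝 0) := by
      refine squeeze_zero (fun N => ratio_nonneg R T N) (fun N => ?_)
        (tendsto_const_div_atTop_nhds_zero_nat (hfin.toFinset.card : ℝ))
      refine div_le_div_of_nonneg_right ?_ (Nat.cast_nonneg N)
      exact_mod_cast hbd N
    exact absurd (tendsto_nhds_unique hTt h0) (ne_of_gt hcpos)
  -- tail of good densities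
  have hK0ev : ∀ᶠ k in atTop, c/2 ≤ m k := hmc.eventually_const_le (by linarith : c/2 < c)
  have hSdens : ∀ k, c/2 ≤ m k →
      ∀ᶠ N in atTop, c/4 ≤ ((initSeg (S k) N).card : ℝ) / (cntR R N : ℝ) :=
    fun k hk => eventually_initSeg_ratio_ge hRinf (hSR k) (by linarith) (hm k)
  have hTdens : ∀ᶠ N in atTop, c/4 ≤ ((initSeg T N).card : ℝ) / (cntR R N : ℝ) :=
    eventually_initSeg_ratio_ge hRinf hTR (by linarith) hTt
  have hΔT : ∀ k (ε : ℝ), 0 < ε → ∀ᶠ N in atTop,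
      ((initSeg (symmDiff (S k) T) N).card : ℝ) / (cntR R N : ℝ) ≤ d k + ε :=
    fun k ε hε => eventually_initSeg_ratio_le hRinf
      (symmDiff_subset_of_subsets (hSR k) hTR) ((hdlt k ε hε).mono fun N h => h.le)
  have hΔSS : ∀ k k' (ε : ℝ), 0 < ε → ∀ᶠ N in atTop,
      ((initSeg (symmDiff (S k) (S k')) N).card : ℝ) / (cntR R N : ℝ) ≤ (d k + d k') + ε := by
    intro k k' ε hε
    refine eventually_initSeg_ratio_le hRinf
      (symmDiff_subset_of_subsets (hSR k) (hSR k')) ?_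
    filter_upwards [hdlt k (ε/2) (by linarith), hdlt k' (ε/2) (by linarith)] with N h1 h2
    calc (relCount R (S k ∆ S k') N : ℝ) / N
        ≤ (relCount R (S k ∆ T) N : ℝ) / N + (relCount R (T ∆ S k') N : ℝ) / N :=
          ratio_symmDiff_triangle R _ _ T N
      _ ≤ (d k + ε/2) + (d k' + ε/2) := by
          rw [symmDiff_comm T (S k')]
          exact add_le_add h1.le h2.le
      _ = (d k + d k') + ε := by ring
  have hgabs : ∀ g : C(UnitAddCircle, ℝ), ∀ x, |g x| ≤ ‖g‖ := by
    intro g x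
    rw [← Real.norm_eq_abs]
    exact g.norm_coe_le_norm x
  -- integral comparisons
  have hIT : ∀ k, c/2 ≤ m k → ∀ β (μ ν : MeasureTheory.Measure UnitAddCircle),
      IsLimitMeasure (S k) β μ → IsLimitMeasure T β ν → ∀ g : C(UnitAddCircle, ℝ),
      |∫ x, g x ∂μ - ∫ x, g x ∂ν| ≤ 2 * ‖g‖ * d k / (c/4) := by
    intro k hk β μ ν hμ hν g
    refine bound_eps_removal (by linarith : (0:ℝ) < c/4) (norm_nonneg g) fun ε hε => ?_
    refine abs_lim_sub_le (hμ g) (hν g) ?_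
    exact eventually_emp_compare hRinf (by linarith : (0:ℝ) < c/4) (norm_nonneg g)
      (hSdens k hk) hTdens (hΔT k ε hε) β _ (hgabs g)
  have hISS : ∀ k k', c/2 ≤ m k → c/2 ≤ m k' → ∀ β (μ ν : MeasureTheory.Measure UnitAddCircle),
      IsLimitMeasure (S k) β μ → IsLimitMeasure (S k') β ν → ∀ g : C(UnitAddCircle, ℝ),
      |∫ x, g x ∂μ - ∫ x, g x ∂ν| ≤ 2 * ‖g‖ * (d k + d k') / (c/4) := by
    intro k k' hk hk' β μ ν hμ hν g
    refine bound_eps_removal (by linarith : (0:ℝ) < c/4) (norm_nonneg g) fun ε hε => ?_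
    refine abs_lim_sub_le (hμ g) (hν g) ?_
    exact eventually_emp_compare hRinf (by linarith : (0:ℝ) < c/4) (norm_nonneg g)
      (hSdens k hk) (hSdens k' hk') (hΔSS k k' ε hε) β _ (hgabs g)
  -- set bounds
  have hset_bd : ∀ k, c/2 ≤ m k → ∀ β (μ ν : MeasureTheory.Measure UnitAddCircle),
      IsProbabilityMeasure μ → IsProbabilityMeasure ν →
      IsLimitMeasure (S k) β μ → IsLimitMeasure T β ν →
      ∀ B : Set UnitAddCircle, MeasurableSet B →
        |(μ B).toReal - (ν B).toReal| ≤ 8 * d k / c := by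
    intro k hk β μ ν hμp hνp hμ hν B hB
    refine set_bound_of_integral_bound (fun g hg => ?_) hB
    have h1 := hIT k hk β μ ν hμ hν g
    have hg1 : ‖g‖ ≤ 1 := by
      refine (ContinuousMap.norm_le _ zero_le_one).2 fun x => ?_
      rw [Real.norm_eq_abs]
      exact hg x
    calc |∫ x, g x ∂μ - ∫ x, g x ∂ν| ≤ 2 * ‖g‖ * d k / (c/4) := h1
      _ ≤ 8 * d k / c := by
          rw [div_le_div_iff₀ (by linarith) (by linarith)]
          nlinarith [mul_nonneg (hd0 k) hcpos.le, hg1, hcpos, hd0 k]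
  have hset_bd2 : ∀ k k', c/2 ≤ m k → c/2 ≤ m k' →
      ∀ β (μ ν : MeasureTheory.Measure UnitAddCircle),
      IsProbabilityMeasure μ → IsProbabilityMeasure ν →
      IsLimitMeasure (S k) β μ → IsLimitMeasure (S k') β ν →
      ∀ B : Set UnitAddCircle, MeasurableSet B →
        |(μ B).toReal - (ν B).toReal| ≤ 8 * d k / c + 8 * d k' / c := by
    intro k k' hk hk' β μ ν hμp hνp hμ hν B hB
    refine set_bound_of_integral_bound (fun g hg => ?_) hB
    have h1 := hISS k k' hk hk' β μ ν hμ hν g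
    have hg1 : ‖g‖ ≤ 1 := by
      refine (ContinuousMap.norm_le _ zero_le_one).2 fun x => ?_
      rw [Real.norm_eq_abs]
      exact hg x
    calc |∫ x, g x ∂μ - ∫ x, g x ∂ν| ≤ 2 * ‖g‖ * (d k + d k') / (c/4) := h1
      _ ≤ 8 * d k / c + 8 * d k' / c := by
          rw [← add_div, div_le_div_iff₀ (by linarith) (by linarith)]
          nlinarith [mul_nonneg (add_nonneg (hd0 k) (hd0 k')) hcpos.le, hg1, hcpos, hd0 k, hd0 k']
  -- T is a good set
  obtain ⟨K₀, hK₀⟩ := eventually_atTop.1 hK0ev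
  have hdK : Tendsto (fun j => d (K₀ + j)) atTop (𝓝 0) := by
    have h1 := hdtend.comp (tendsto_add_atTop_nat K₀)
    exact h1.congr fun j => by simp [Nat.add_comm]
  have hTgood : IsGoodSet T := by
    refine ⟨hTinf, fun α => ?_⟩
    choose ν hνp hνl using fun j : ℕ => (hSgood (K₀ + j)).2 α
    have he_tend : Tendsto (fun j => 8 * d (K₀ + j) / c) atTop (𝓝 0) := by
      have h2 := hdK.const_mul (8/c)
      rw [mul_zero] at h2
      exact h2.congr fun j => by ring
    obtain ⟨μα, hμαp, hμαt⟩ := exists_limit_measure ν hνp (fun j => 8 * d (K₀ + j) / c)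
      he_tend (fun j i B hB => hset_bd2 (K₀ + j) (K₀ + i)
        (hK₀ _ (Nat.le_add_right _ _)) (hK₀ _ (Nat.le_add_right _ _)) α (ν j) (ν i)
        (hνp j) (hνp i) (hνl j) (hνl i) B hB)
    refine ⟨μα, hμαp, ?_⟩
    intro g
    have hIg : Tendsto (fun j => ∫ x, g x ∂(ν j)) atTop (𝓝 (∫ x, g x ∂μα)) :=
      hμαt (fun x => g x) (map_continuous g).measurable ‖g‖ (hgabs g)
    rw [Metric.tendsto_atTop]
    intro ε hε
    set η : ℝ := ε * c / (48 * (‖g‖ + 1)) with hη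
    have hg1pos : (0:ℝ) < ‖g‖ + 1 := by nlinarith [norm_nonneg g]
    have hηpos : 0 < η := by
      rw [hη]
      exact div_pos (mul_pos hε hcpos) (by nlinarith)
    have hj1 : ∀ᶠ j in atTop, d (K₀ + j) < η := hdK.eventually (gt_mem_nhds hηpos)
    have hj2 : ∀ᶠ j in atTop, |∫ x, g x ∂(ν j) - ∫ x, g x ∂μα| < ε/3 := by
      have := Metric.tendsto_nhds.1 hIg (ε/3) (by linarith)
      simpa [Real.dist_eq] using this
    obtain ⟨j, hj1', hj2'⟩ := (hj1.and hj2).exists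
    have hcmp : ∀ᶠ N in atTop,
        |empAvg (S (K₀ + j)) α N (fun x => g x) - empAvg T α N (fun x => g x)|
          ≤ 2 * ‖g‖ * (d (K₀ + j) + η) / (c/4) :=
      eventually_emp_compare hRinf (by linarith : (0:ℝ) < c/4) (norm_nonneg g)
        (hSdens _ (hK₀ _ (Nat.le_add_right _ _))) hTdens (hΔT _ η hηpos) α _ (hgabs g)
    have hbound_small : 2 * ‖g‖ * (d (K₀ + j) + η) / (c/4) < ε/3 := by
      have hd' : d (K₀ + j) + η < 2 * η := by linarith
      have hηval : 48 * (‖g‖ + 1) * η = ε * c := by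
        rw [hη]
        field_simp
      rw [div_lt_iff₀ (by linarith : (0:ℝ) < c/4)]
      nlinarith [norm_nonneg g, hd0 (K₀ + j), hηpos, hcpos, hε,
        mul_nonneg (norm_nonneg g) hηpos.le]
    have hemp : ∀ᶠ N in atTop,
        |empAvg (S (K₀ + j)) α N (fun x => g x) - ∫ x, g x ∂(ν j)| < ε/3 := by
      have := Metric.tendsto_nhds.1 (hνl j g) (ε/3) (by linarith)
      simpa [Real.dist_eq] using this
    have hfinal : ∀ᶠ N in atTop,
        dist (empAvg T α N (fun x => g x)) (∫ x, g x ∂μα) < ε := by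
      filter_upwards [hcmp, hemp] with N h1' h2'
      rw [Real.dist_eq]
      have htri : |empAvg T α N (fun x => g x) - ∫ x, g x ∂μα|
          ≤ |empAvg T α N (fun x => g x) - empAvg (S (K₀ + j)) α N (fun x => g x)|
            + |empAvg (S (K₀ + j)) α N (fun x => g x) - ∫ x, g x ∂(ν j)|
            + |∫ x, g x ∂(ν j) - ∫ x, g x ∂μα| := by
        calc |empAvg T α N (fun x => g x) - ∫ x, g x ∂μα|
            ≤ |empAvg T α N (fun x => g x) - ∫ x, g x ∂(ν j)|
              + |∫ x, g x ∂(ν j) - ∫ x, g x ∂μα| := abs_sub_le _ _ _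
          _ ≤ (|empAvg T α N (fun x => g x) - empAvg (S (K₀ + j)) α N (fun x => g x)|
              + |empAvg (S (K₀ + j)) α N (fun x => g x) - ∫ x, g x ∂(ν j)|)
              + |∫ x, g x ∂(ν j) - ∫ x, g x ∂μα| :=
              add_le_add (abs_sub_le _ _ _) le_rfl
      rw [abs_sub_comm] at h1'
      linarith
    obtain ⟨N₀, hN₀⟩ := eventually_atTop.1 hfinal
    exact ⟨N₀, hN₀⟩
  refine ⟨⟨c, hcpos, hmc, hTt⟩, hTgood, ?_⟩
  -- part 3
  intro μk μT hμk hμT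
  have hPk : ∀ k β, IsProbabilityMeasure (μk k β) :=
    fun k β => isProb_of_isLimitMeasure (hSgood k).1 (hμk k β)
  have hPT : ∀ β, IsProbabilityMeasure (μT β) :=
    fun β => isProb_of_isLimitMeasure hTinf (hμT β)
  have hvar : ∀ k, c/2 ≤ m k → ∀ β, varDist (μk k β) (μT β) ≤ 8 * d k / c := by
    intro k hk β
    refine varDist_le (div_nonneg (by nlinarith [hd0 k]) hcpos.le) ?_
    exact fun B hB => hset_bd k hk β _ _ (hPk k β) (hPT β) (hμk k β) (hμT β) B hB
  have hsup : ∀ᶠ k in atTop, (⨆ β : ℝ, varDist (μk k β) (μT β)) ≤ 8 * d k / c := by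
    filter_upwards [hK0ev] with k hk
    exact Real.iSup_le (fun β => hvar k hk β) (div_nonneg (by nlinarith [hd0 k]) hcpos.le)
  have hlow : ∀ k, 0 ≤ ⨆ β : ℝ, varDist (μk k β) (μT β) :=
    fun k => Real.iSup_nonneg fun β => varDist_nonneg _ _
  have hb0 : Tendsto (fun k => 8 * d k / c) atTop (𝓝 0) := by
    have h2 := hdtend.const_mul (8/c)
    rw [mul_zero] at h2
    exact h2.congr fun k => by ring
  exact tendsto_of_tendsto_of_tendsto_of_le_of_le' tendsto_const_nhds hb0
    (Eventually.of_forall hlow) hsup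
end
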